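/- arXiv:1506.05697 — 4 statements merged into one kernel-verified Lean document; each statement's English description precedes it below -/
import Mathlib

section
/- For every k ∈ ℕ one has λ_k ≤ β. -/
open MeasureTheory Filter Topology

noncomputable section

/-- Euclidean space `ℝ^N`. -/
abbrev Vec (N : ℕ) := EuclideanSpace ℝ (Fin N)

/-- The (squared) Gagliardo seminorm
`[u]² = ∫∫ |u(x)-u(y)|² / |x-y|^(N+2s) dx dy`. -/
def gagliardo (N : ℕ) (s : ℝ) (u : Vec N → ℝ) : ℝ :=
  ∫ p : Vec N × Vec N, (u p.1 - u p.2) ^ 2 / ‖p.1 - p.2‖ ^ ((N : ℝ) + 2 * s)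

/-- `u ∈ H^s(ℝ^N)`: `u ∈ L²` and the Gagliardo integrand is integrable. -/
def memHs (N : ℕ) (s : ℝ) (u : Vec N → ℝ) : Prop :=
  MemLp u 2 (volume : Measure (Vec N)) ∧
    Integrable (fun p : Vec N × Vec N =>
      (u p.1 - u p.2) ^ 2 / ‖p.1 - p.2‖ ^ ((N : ℝ) + 2 * s)) volume

/-- The functional `Φ(u) = [u]² + β ∫ g u²`. -/
def Phi (N : ℕ) (s β : ℝ) (g : Vec N → ℝ) (u : Vec N → ℝ) : ℝ :=
  gagliardo N s u + β * ∫ x : Vec N, g x * u x ^ 2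

/-- Assumption (g₁): `g` is bounded measurable with `0 ≤ g ≤ 1`, `g → 1` at infinity,
and `{g < 1}` has positive measure. -/
def g1cond (N : ℕ) (g : Vec N → ℝ) : Prop :=
  Measurable g ∧ (∀ x, 0 ≤ g x ∧ g x ≤ 1) ∧
    Tendsto g (cocompact (Vec N)) (𝓝 1) ∧
    0 < volume {x : Vec N | g x < 1}

/-- The constraint set `Σ = {u ∈ H^s : ∫ u² = 1}`. -/
def SigmaSet (N : ℕ) (s : ℝ) : Set (Vec N → ℝ) :=
  {u | memHs N s u ∧ ∫ x : Vec N, u x ^ 2 = 1}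

/-- Distance induced by the `H^s` norm `‖u‖² = [u]² + β ‖u‖₂²`. -/
def hsDist (N : ℕ) (s β : ℝ) (u v : Vec N → ℝ) : ℝ :=
  Real.sqrt (gagliardo N s (u - v) + β * ∫ x : Vec N, (u x - v x) ^ 2)

/-- Sequential compactness of a set with respect to the `H^s` distance. -/
def IsHsCompact (N : ℕ) (s β : ℝ) (A : Set (Vec N → ℝ)) : Prop :=
  ∀ f : ℕ → Vec N → ℝ, (∀ n, f n ∈ A) →
    ∃ u ∈ A, ∃ φ : ℕ → ℕ, StrictMono φ ∧
      Tendsto (fun n => hsDist N s β (f (φ n)) u) atTop (𝓝 0)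

/-- Continuity on a set `A ⊆ H^s` of a map into `ℝ^m`, with respect to the `H^s` distance. -/
def HsContOn (N : ℕ) (s β : ℝ) {m : ℕ} (A : Set (Vec N → ℝ))
    (h : (Vec N → ℝ) → EuclideanSpace ℝ (Fin m)) : Prop :=
  ∀ u ∈ A, ∀ ε > 0, ∃ δ > 0, ∀ v ∈ A, hsDist N s β u v < δ → dist (h v) (h u) < ε

/-- The Krasnoselskii genus of `A` is at least `k`: for every `m < k` there is no
continuous odd map `A → ℝ^m \ {0}`. -/
def genusGE (N : ℕ) (s β : ℝ) (A : Set (Vec N → ℝ)) (k : ℕ) : Prop :=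
  ∀ m : ℕ, m < k →
    ¬ ∃ h : (Vec N → ℝ) → EuclideanSpace ℝ (Fin m),
      HsContOn N s β A h ∧ (∀ u ∈ A, h (-u) = -h u) ∧ ∀ u ∈ A, h u ≠ 0

/-- The class `Σ_k` of compact symmetric subsets of `Σ` with genus at least `k`. -/
def SigmaK (N : ℕ) (s β : ℝ) (k : ℕ) : Set (Set (Vec N → ℝ)) :=
  {A | A ⊆ SigmaSet N s ∧ IsHsCompact N s β A ∧ (∀ u ∈ A, -u ∈ A) ∧ genusGE N s β A k}

/-- The minimax levels `λ_k = inf_{A ∈ Σ_k} sup_{u ∈ A} Φ(u)`. -/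
def lambdaK (N : ℕ) (s β : ℝ) (g : Vec N → ℝ) (k : ℕ) : ℝ :=
  sInf {c | ∃ A ∈ SigmaK N s β k, c = sSup (Phi N s β g '' A)}

/-- `(lam, u)` is an eigenpair of `L_β = (-Δ)^s + β g`: `u ∈ H^s`, `u ≠ 0`, and the weak
eigenvalue equation holds against every test function `φ ∈ H^s`. -/
def IsEigenpair (N : ℕ) (s β : ℝ) (g : Vec N → ℝ) (lam : ℝ) (u : Vec N → ℝ) : Prop :=
  memHs N s u ∧ ¬ u =ᵐ[(volume : Measure (Vec N))] 0 ∧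
    ∀ φ : Vec N → ℝ, memHs N s φ →
      (∫ p : Vec N × Vec N,
          (u p.1 - u p.2) * (φ p.1 - φ p.2) / ‖p.1 - p.2‖ ^ ((N : ℝ) + 2 * s)) +
        β * ∫ x : Vec N, g x * u x * φ x = lam * ∫ x : Vec N, u x * φ x

/-- The first eigenvalue `λ₁ = inf_{u ∈ Σ} Φ(u)`. -/
def lambda1 (N : ℕ) (s β : ℝ) (g : Vec N → ℝ) : ℝ :=
  sInf (Phi N s β g '' SigmaSet N s)

namespace LambdaKAux

instance (N : ℕ) : MeasureTheory.Measure.IsAddHaarMeasure (volume : Measure (Vec N × Vec N)) :=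
  MeasureTheory.Measure.prod.instIsAddHaarMeasure _ _

/-- The scaling operator `u ↦ λ^{N/2} u(λ ·)`. -/
def Tm (N : ℕ) (lam : ℝ) (u : Vec N → ℝ) : Vec N → ℝ :=
  fun x => lam ^ ((N : ℝ) / 2) * u (lam • x)

lemma Tm_sub {N : ℕ} {lam : ℝ} (a b : Vec N → ℝ) :
    Tm N lam (a - b) = Tm N lam a - Tm N lam b := by
  funext x; simp [Tm, mul_sub]

lemma Tm_neg {N : ℕ} {lam : ℝ} (a : Vec N → ℝ) :
    Tm N lam (-a) = -Tm N lam a := by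
  funext x; simp [Tm]

lemma sq_coeff {N : ℕ} {lam : ℝ} (hlam : 0 < lam) (c : ℝ) :
    (lam ^ ((N : ℝ) / 2) * c) ^ 2 = lam ^ N * c ^ 2 := by
  rw [mul_pow]
  congr 1
  have he : (N : ℝ) / 2 * ((2 : ℕ) : ℝ) = ((N : ℕ) : ℝ) := by push_cast; ring
  rw [← Real.rpow_natCast (lam ^ ((N : ℝ) / 2)) 2, ← Real.rpow_mul hlam.le, he,
    Real.rpow_natCast]

lemma int_smul {N : ℕ} (f : Vec N → ℝ) {lam : ℝ} (hlam : 0 < lam) :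
    ∫ x : Vec N, f (lam • x) = (lam ^ N)⁻¹ * ∫ x, f x := by
  rw [MeasureTheory.Measure.integral_comp_smul volume f lam, finrank_euclideanSpace_fin,
    smul_eq_mul, abs_of_pos (by positivity)]

lemma integral_sq_Tm {N : ℕ} {lam : ℝ} (hlam : 0 < lam) (u : Vec N → ℝ) :
    ∫ x, (Tm N lam u x) ^ 2 = ∫ x, (u x) ^ 2 := by
  have h1 : ∀ x : Vec N, (Tm N lam u x) ^ 2 = lam ^ N * (fun y => (u y) ^ 2) (lam • x) :=
    fun x => sq_coeff hlam _
  have hN : (lam : ℝ) ^ N ≠ 0 := (pow_pos hlam N).ne'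
  calc ∫ x, (Tm N lam u x) ^ 2 = ∫ x, lam ^ N * (fun y => (u y) ^ 2) (lam • x) := by
        simp_rw [h1]
    _ = lam ^ N * ∫ x, (fun y => (u y) ^ 2) (lam • x) := integral_const_mul _ _
    _ = lam ^ N * ((lam ^ N)⁻¹ * ∫ x, (u x) ^ 2) := by
        rw [int_smul (fun y => (u y) ^ 2) hlam]
    _ = ∫ x, (u x) ^ 2 := by field_simp

lemma point_eq {N : ℕ} {s lam : ℝ} (hlam : 0 < lam) (u : Vec N → ℝ) (p : Vec N × Vec N) :
    (Tm N lam u p.1 - Tm N lam u p.2) ^ 2 / ‖p.1 - p.2‖ ^ ((N : ℝ) + 2 * s)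
      = lam ^ N * (lam ^ N * lam ^ (2 * s)) *
        ((fun q : Vec N × Vec N => (u q.1 - u q.2) ^ 2 / ‖q.1 - q.2‖ ^ ((N : ℝ) + 2 * s))
          (lam • p)) := by
  have hα : lam ^ ((N : ℝ) + 2 * s) = lam ^ N * lam ^ (2 * s) := by
    rw [Real.rpow_add hlam, Real.rpow_natCast]
  show _ = lam ^ N * (lam ^ N * lam ^ (2 * s)) *
      ((u (lam • p.1) - u (lam • p.2)) ^ 2 / ‖lam • p.1 - lam • p.2‖ ^ ((N : ℝ) + 2 * s))
  have hden : ‖lam • p.1 - lam • p.2‖ ^ ((N : ℝ) + 2 * s)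
      = (lam ^ N * lam ^ (2 * s)) * ‖p.1 - p.2‖ ^ ((N : ℝ) + 2 * s) := by
    rw [← smul_sub, norm_smul, Real.norm_eq_abs, abs_of_pos hlam,
      Real.mul_rpow hlam.le (norm_nonneg _), hα]
  have hnum : (Tm N lam u p.1 - Tm N lam u p.2) ^ 2
      = lam ^ N * (u (lam • p.1) - u (lam • p.2)) ^ 2 := by
    show (lam ^ ((N : ℝ) / 2) * u (lam • p.1) - lam ^ ((N : ℝ) / 2) * u (lam • p.2)) ^ 2 = _
    rw [← mul_sub]
    exact sq_coeff hlam _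
  rw [hnum, hden]
  set c := (u (lam • p.1) - u (lam • p.2)) ^ 2 with hc
  set t := ‖p.1 - p.2‖ ^ ((N : ℝ) + 2 * s) with ht
  set K := lam ^ N * lam ^ (2 * s) with hK
  have hKne : K ≠ 0 :=
    (mul_pos (pow_pos hlam N) (Real.rpow_pos_of_pos hlam _)).ne'
  rw [mul_div_assoc, mul_assoc, ← mul_div_assoc K c (K * t), mul_div_mul_left c t hKne]

lemma gag_Tm {N : ℕ} {s lam : ℝ} (hlam : 0 < lam) (u : Vec N → ℝ) :
    gagliardo N s (Tm N lam u) = lam ^ (2 * s) * gagliardo N s u := by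
  unfold gagliardo
  set F : Vec N × Vec N → ℝ :=
    fun q => (u q.1 - u q.2) ^ 2 / ‖q.1 - q.2‖ ^ ((N : ℝ) + 2 * s) with hF
  have h1 : (fun p : Vec N × Vec N =>
        (Tm N lam u p.1 - Tm N lam u p.2) ^ 2 / ‖p.1 - p.2‖ ^ ((N : ℝ) + 2 * s))
      = fun p => lam ^ N * (lam ^ N * lam ^ (2 * s)) * F (lam • p) :=
    funext fun p => point_eq hlam u p
  rw [h1, integral_const_mul, MeasureTheory.Measure.integral_comp_smul volume F lam,
    Module.finrank_prod, finrank_euclideanSpace_fin, smul_eq_mul,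
    abs_of_pos (by positivity), pow_add]
  have hN : (lam : ℝ) ^ N ≠ 0 := (pow_pos hlam N).ne'
  field_simp

lemma int_Tm {N : ℕ} {s lam : ℝ} (hlam : 0 < lam) (u : Vec N → ℝ)
    (hu : Integrable (fun p : Vec N × Vec N =>
      (u p.1 - u p.2) ^ 2 / ‖p.1 - p.2‖ ^ ((N : ℝ) + 2 * s)) volume) :
    Integrable (fun p : Vec N × Vec N =>
      (Tm N lam u p.1 - Tm N lam u p.2) ^ 2 / ‖p.1 - p.2‖ ^ ((N : ℝ) + 2 * s)) volume := by
  have h1 : (fun p : Vec N × Vec N =>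
        (Tm N lam u p.1 - Tm N lam u p.2) ^ 2 / ‖p.1 - p.2‖ ^ ((N : ℝ) + 2 * s))
      = fun p => lam ^ N * (lam ^ N * lam ^ (2 * s)) *
        ((fun q : Vec N × Vec N => (u q.1 - u q.2) ^ 2 / ‖q.1 - q.2‖ ^ ((N : ℝ) + 2 * s))
          (lam • p)) :=
    funext fun p => point_eq hlam u p
  rw [h1]
  exact (hu.comp_smul hlam.ne').const_mul _

lemma memLp_Tm {N : ℕ} {lam : ℝ} (hlam : 0 < lam) (u : Vec N → ℝ)
    (hu : MemLp u 2 (volume : Measure (Vec N))) :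
    MemLp (Tm N lam u) 2 (volume : Measure (Vec N)) := by
  have ha : AEStronglyMeasurable (Tm N lam u) (volume : Measure (Vec N)) := by
    have h1 := hu.aestronglyMeasurable.comp_quasiMeasurePreserving
      (MeasureTheory.Measure.quasiMeasurePreserving_smul volume hlam.ne')
    exact h1.const_mul _
  refine (memLp_two_iff_integrable_sq ha).2 ?_
  have hfun : (fun x => (Tm N lam u x) ^ 2)
      = fun x => lam ^ N * ((fun y => (u y) ^ 2) (lam • x)) :=
    funext fun x => sq_coeff hlam _
  rw [hfun]
  exact (hu.integrable_sq.comp_smul hlam.ne').const_mul _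

lemma hsDist_Tm_le {N : ℕ} {s β lam : ℝ} (hlam : 0 < lam) (hlam1 : lam ≤ 1) (hs : 0 ≤ s)
    (a b : Vec N → ℝ) :
    hsDist N s β (Tm N lam a) (Tm N lam b) ≤ hsDist N s β a b := by
  unfold hsDist
  apply Real.sqrt_le_sqrt
  rw [← Tm_sub, gag_Tm hlam]
  have e2 : (fun x => (Tm N lam a x - Tm N lam b x) ^ 2)
      = fun x => (Tm N lam (a - b) x) ^ 2 := by
    funext x
    have h := congrFun (Tm_sub (N := N) (lam := lam) a b) x
    rw [Pi.sub_apply] at h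
    rw [← h]
  rw [e2, integral_sq_Tm hlam]
  have e3 : (fun x => ((a - b : Vec N → ℝ) x) ^ 2) = fun x => (a x - b x) ^ 2 := by
    funext x; rw [Pi.sub_apply]
  rw [e3]
  have hg : 0 ≤ gagliardo N s (a - b) :=
    integral_nonneg fun p => div_nonneg (sq_nonneg _) (Real.rpow_nonneg (norm_nonneg _) _)
  have hle1 : lam ^ (2 * s) ≤ 1 := Real.rpow_le_one hlam.le hlam1 (by linarith)
  have := mul_le_of_le_one_left hg hle1
  linarith

lemma gag_nonneg {N : ℕ} {s : ℝ} (u : Vec N → ℝ) : 0 ≤ gagliardo N s u :=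
  integral_nonneg fun p => div_nonneg (sq_nonneg _) (Real.rpow_nonneg (norm_nonneg _) _)

lemma Tm_mem_SigmaK {N : ℕ} {s β lam : ℝ} (hs : 0 < s) (hlam : 0 < lam) (hlam1 : lam ≤ 1)
    {k : ℕ} {A : Set (Vec N → ℝ)} (hA : A ∈ SigmaK N s β k) :
    Tm N lam '' A ∈ SigmaK N s β k := by
  obtain ⟨hsub, hcomp, hsym, hgen⟩ := hA
  refine ⟨?_, ?_, ?_, ?_⟩
  · rintro _ ⟨u, hu, rfl⟩
    obtain ⟨⟨hu2, huint⟩, hunorm⟩ := hsub hu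
    exact ⟨⟨memLp_Tm hlam u hu2, int_Tm hlam u huint⟩, by rw [integral_sq_Tm hlam, hunorm]⟩
  · intro f hf
    choose w hwA hwT using hf
    obtain ⟨u, huA, φ, hφ, htend⟩ := hcomp w hwA
    refine ⟨Tm N lam u, Set.mem_image_of_mem _ huA, φ, hφ, ?_⟩
    refine squeeze_zero (fun n => Real.sqrt_nonneg _) (fun n => ?_) htend
    rw [← hwT (φ n)]
    exact hsDist_Tm_le hlam hlam1 hs.le _ _
  · rintro _ ⟨u, hu, rfl⟩
    exact ⟨-u, hsym u hu, Tm_neg u⟩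
  · intro m hm hex
    obtain ⟨h, hcont, hodd, hne⟩ := hex
    refine hgen m hm ⟨fun v => h (Tm N lam v), ?_, ?_, ?_⟩
    · intro u hu ε hε
      obtain ⟨δ, hδ, hδ2⟩ := hcont (Tm N lam u) (Set.mem_image_of_mem _ hu) ε hε
      exact ⟨δ, hδ, fun v hv hdist => hδ2 (Tm N lam v) (Set.mem_image_of_mem _ hv)
        (lt_of_le_of_lt (hsDist_Tm_le hlam hlam1 hs.le u v) hdist)⟩
    · intro u hu
      show h (Tm N lam (-u)) = -h (Tm N lam u)
      rw [Tm_neg]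
      exact hodd (Tm N lam u) (Set.mem_image_of_mem _ hu)
    · intro u hu
      exact hne (Tm N lam u) (Set.mem_image_of_mem _ hu)

end LambdaKAux

open LambdaKAux in

/-- every minimax level satisfies `λ_k ≤ β`. -/
theorem lambdaK_le_beta (N : ℕ) (s β : ℝ) (hs : s ∈ Set.Ioo (0 : ℝ) 1)
    (hN : 2 * s < N) (hβ : 0 < β) (g : Vec N → ℝ) (hg : g1cond N g) :
    ∀ k : ℕ, 1 ≤ k → lambdaK N s β g k ≤ β := by
  intro k hk
  have hg0 : ∀ x, 0 ≤ g x := fun x => (hg.2.1 x).1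
  have hg1 : ∀ x, g x ≤ 1 := fun x => (hg.2.1 x).2
  have hPhinn : ∀ u : Vec N → ℝ, 0 ≤ Phi N s β g u := fun u =>
    add_nonneg (gag_nonneg u)
      (mul_nonneg hβ.le (integral_nonneg fun x => mul_nonneg (hg0 x) (sq_nonneg _)))
  set S : Set ℝ := {c | ∃ A ∈ SigmaK N s β k, c = sSup (Phi N s β g '' A)} with hSdef
  have hS0 : ∀ c ∈ S, (0 : ℝ) ≤ c := by
    rintro c ⟨A, hA, rfl⟩
    exact Real.sSup_nonneg (by rintro x ⟨u, hu, rfl⟩; exact hPhinn u)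
  have hbdd : BddBelow S := ⟨0, hS0⟩
  show sInf S ≤ β
  by_cases hEx : ∃ A, A ∈ SigmaK N s β k
  · obtain ⟨A₀, hA₀⟩ := hEx
    have hA₀ne : A₀.Nonempty := by
      rcases Set.eq_empty_or_nonempty A₀ with hemp | h
      · exfalso
        refine hA₀.2.2.2 0 (by omega) ⟨fun _ => 0, ?_, ?_, ?_⟩ <;>
          · intro u hu
            rw [hemp] at hu
            exact absurd hu (Set.notMem_empty u)
      · exact h
    by_cases hbA : BddAbove (Phi N s β g '' A₀)
    · obtain ⟨M, hM⟩ := hbA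
      have hM0 : 0 ≤ M :=
        le_trans (hPhinn hA₀ne.choose) (hM ⟨_, hA₀ne.choose_spec, rfl⟩)
      refine le_of_forall_pos_le_add fun ε hε => ?_
      have hM1 : (0 : ℝ) < M + 1 := by linarith
      have hb : (0 : ℝ) < ε / (M + 1) := div_pos hε hM1
      set lam : ℝ := min 1 ((ε / (M + 1)) ^ (1 / (2 * s))) with hlamdef
      have hlam : 0 < lam := lt_min one_pos (Real.rpow_pos_of_pos hb _)
      have hlam1 : lam ≤ 1 := min_le_left _ _
      have hs2 : (0 : ℝ) < 2 * s := by linarith [hs.1]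
      have hpow : lam ^ (2 * s) ≤ ε / (M + 1) := by
        calc lam ^ (2 * s) ≤ ((ε / (M + 1)) ^ (1 / (2 * s))) ^ (2 * s) :=
              Real.rpow_le_rpow hlam.le (min_le_right _ _) hs2.le
          _ = ε / (M + 1) := by
              rw [← Real.rpow_mul hb.le, one_div_mul_cancel hs2.ne', Real.rpow_one]
      have hA₁ : Tm N lam '' A₀ ∈ SigmaK N s β k := Tm_mem_SigmaK hs.1 hlam hlam1 hA₀
      have hmem : sSup (Phi N s β g '' (Tm N lam '' A₀)) ∈ S := ⟨_, hA₁, rfl⟩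
      refine le_trans (csInf_le hbdd hmem) ?_
      refine Real.sSup_le ?_ (by linarith)
      rintro x ⟨v, hv, rfl⟩
      obtain ⟨u, hu, rfl⟩ := hv
      have huS := hA₀.1 hu
      have hgagM : gagliardo N s u ≤ M := by
        have h1 : Phi N s β g u ≤ M := hM ⟨u, hu, rfl⟩
        have h2 : 0 ≤ β * ∫ x, g x * u x ^ 2 :=
          mul_nonneg hβ.le (integral_nonneg fun x => mul_nonneg (hg0 x) (sq_nonneg _))
        unfold Phi at h1
        linarith
      have hTuS : Tm N lam u ∈ SigmaSet N s := hA₁.1 (Set.mem_image_of_mem _ hu)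
      have hint : Integrable (fun x => (Tm N lam u x) ^ 2) volume := hTuS.1.1.integrable_sq
      have hgle : ∫ x, g x * (Tm N lam u x) ^ 2 ≤ 1 := by
        have hmono : ∫ x, g x * (Tm N lam u x) ^ 2 ≤ ∫ x, (Tm N lam u x) ^ 2 := by
          refine integral_mono_of_nonneg
            (Filter.Eventually.of_forall fun x => mul_nonneg (hg0 x) (sq_nonneg _)) hint
            (Filter.Eventually.of_forall fun x => ?_)
          show g x * Tm N lam u x ^ 2 ≤ Tm N lam u x ^ 2
          have := hg1 x
          nlinarith [sq_nonneg (Tm N lam u x)]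
        rw [integral_sq_Tm hlam, huS.2] at hmono
        exact hmono
      show Phi N s β g (Tm N lam u) ≤ β + ε
      unfold Phi
      rw [gag_Tm hlam]
      have t1 : lam ^ (2 * s) * gagliardo N s u ≤ ε := by
        calc lam ^ (2 * s) * gagliardo N s u ≤ (ε / (M + 1)) * M :=
              mul_le_mul hpow hgagM (gag_nonneg u) hb.le
          _ ≤ ε := by
              rw [div_mul_eq_mul_div, div_le_iff₀ hM1]
              nlinarith
      have t2 : β * ∫ x, g x * (Tm N lam u x) ^ 2 ≤ β * 1 :=
        mul_le_mul_of_nonneg_left hgle hβ.le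
      linarith
    · have h0 : sSup (Phi N s β g '' A₀) = 0 := Real.sSup_of_not_bddAbove hbA
      have hmem : (0 : ℝ) ∈ S := ⟨A₀, hA₀, h0.symm⟩
      exact le_trans (csInf_le hbdd hmem) hβ.le
  · have hemp : S = ∅ := by
      ext c
      simp only [hSdef, Set.mem_setOf_eq, Set.mem_empty_iff_false, iff_false]
      rintro ⟨A, hA, -⟩
      exact hEx ⟨A, hA⟩
    rw [hemp, Real.sInf_empty]
    exact hβ.le
end
end

section
/- If λ₁ = inf_{u ∈ Σ} Φ(u) is an eigenvalue of L_β, then it is simple: any two eigenfunctions u, v associated with λ₁ are proportional, i.e. there exists χ ∈ ℝ with v = χ u almost everywhere in ℝ^N. -/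
open MeasureTheory Filter Topology

noncomputable section

set_option maxHeartbeats 1000000
namespace Aux

variable {N : ℕ} {s β lam : ℝ} {g u v w φ : Vec N → ℝ}

/-- The kernel. -/
def Kk (N : ℕ) (s : ℝ) (p : Vec N × Vec N) : ℝ := ‖p.1 - p.2‖ ^ ((N : ℝ) + 2 * s)

lemma Kk_nonneg (p : Vec N × Vec N) : 0 ≤ Kk N s p := Real.rpow_nonneg (norm_nonneg _) _

lemma Kk_meas : Measurable (Kk N s) := by
  unfold Kk; measurability

/-- Gagliardo integrand. -/
def Gi (N : ℕ) (s : ℝ) (u : Vec N → ℝ) (p : Vec N × Vec N) : ℝ :=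
  (u p.1 - u p.2) ^ 2 / Kk N s p

/-- Cross integrand. -/
def Ci (N : ℕ) (s : ℝ) (u v : Vec N → ℝ) (p : Vec N × Vec N) : ℝ :=
  (u p.1 - u p.2) * (v p.1 - v p.2) / Kk N s p

lemma gagliardo_eq : gagliardo N s u = ∫ p, Gi N s u p := rfl

lemma memHs_iff : memHs N s u ↔ MemLp u 2 volume ∧ Integrable (Gi N s u) volume := Iff.rfl

lemma div_le_div_nonneg {a b K : ℝ} (h : a ≤ b) (hK : 0 ≤ K) : a / K ≤ b / K := by
  rw [div_eq_mul_inv, div_eq_mul_inv]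
  exact mul_le_mul_of_nonneg_right h (inv_nonneg.mpr hK)

lemma Gi_nonneg (p : Vec N × Vec N) : 0 ≤ Gi N s u p :=
  div_nonneg (sq_nonneg _) (Kk_nonneg p)

lemma aesm_fst (hu : AEStronglyMeasurable u (volume : Measure (Vec N))) :
    AEStronglyMeasurable (fun p : Vec N × Vec N => u p.1) volume := by
  rw [Measure.volume_eq_prod]
  exact hu.comp_quasiMeasurePreserving Measure.quasiMeasurePreserving_fst

lemma aesm_snd (hu : AEStronglyMeasurable u (volume : Measure (Vec N))) :
    AEStronglyMeasurable (fun p : Vec N × Vec N => u p.2) volume := by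
  rw [Measure.volume_eq_prod]
  exact hu.comp_quasiMeasurePreserving Measure.quasiMeasurePreserving_snd

lemma ae_fst {P : Vec N → Prop} (h : ∀ᵐ x : Vec N, P x) :
    ∀ᵐ q : Vec N × Vec N, P q.1 := by
  rw [ae_iff] at h ⊢
  rw [Measure.volume_eq_prod]
  exact Measure.quasiMeasurePreserving_fst.preimage_null h

lemma ae_snd {P : Vec N → Prop} (h : ∀ᵐ x : Vec N, P x) :
    ∀ᵐ q : Vec N × Vec N, P q.2 := by
  rw [ae_iff] at h ⊢
  rw [Measure.volume_eq_prod]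
  exact Measure.quasiMeasurePreserving_snd.preimage_null h

lemma aesm_Ci (hu : AEStronglyMeasurable u (volume : Measure (Vec N)))
    (hv : AEStronglyMeasurable v (volume : Measure (Vec N))) :
    AEStronglyMeasurable (Ci N s u v) volume := by
  have h1 : AEStronglyMeasurable
      (fun p : Vec N × Vec N => (u p.1 - u p.2) * (v p.1 - v p.2) * (Kk N s p)⁻¹) volume :=
    (((aesm_fst hu).sub (aesm_snd hu)).mul ((aesm_fst hv).sub (aesm_snd hv))).mul
      (Kk_meas.inv.aestronglyMeasurable)
  exact h1.congr (Eventually.of_forall fun p => by rw [Ci, div_eq_mul_inv])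

lemma aesm_Gi (hu : AEStronglyMeasurable u (volume : Measure (Vec N))) :
    AEStronglyMeasurable (Gi N s u) volume := by
  have := aesm_Ci (s := s) hu hu
  refine this.congr (Eventually.of_forall fun p => ?_)
  simp [Ci, Gi, sq]

lemma integrable_Ci (hu : memHs N s u) (hv : memHs N s v) :
    Integrable (Ci N s u v) volume := by
  have h2u : Integrable (Gi N s u) volume := hu.2
  have h2v : Integrable (Gi N s v) volume := hv.2
  refine Integrable.mono' (g := fun p => Gi N s u p + Gi N s v p)
    (by exact h2u.add h2v) (aesm_Ci hu.1.aestronglyMeasurable hv.1.aestronglyMeasurable) ?_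
  refine Eventually.of_forall fun p => ?_
  have hK := Kk_nonneg (N := N) (s := s) p
  have h1 : |(u p.1 - u p.2) * (v p.1 - v p.2)| ≤
      (u p.1 - u p.2) ^ 2 + (v p.1 - v p.2) ^ 2 := by
    refine abs_le.mpr ⟨?_, ?_⟩ <;> nlinarith [sq_nonneg (u p.1 - u p.2 + (v p.1 - v p.2)),
      sq_nonneg (u p.1 - u p.2 - (v p.1 - v p.2))]
  have : ‖Ci N s u v p‖ = |(u p.1 - u p.2) * (v p.1 - v p.2)| / Kk N s p := by
    rw [Real.norm_eq_abs, Ci, abs_div, abs_of_nonneg hK]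
  rw [this]
  calc |(u p.1 - u p.2) * (v p.1 - v p.2)| / Kk N s p
      ≤ ((u p.1 - u p.2) ^ 2 + (v p.1 - v p.2) ^ 2) / Kk N s p := div_le_div_nonneg h1 hK
    _ = Gi N s u p + Gi N s v p := add_div _ _ _

lemma memHs_of (h1 : MemLp u 2 (volume : Measure (Vec N)))
    (h2 : Integrable (Gi N s u) volume) : memHs N s u := ⟨h1, h2⟩

lemma memHs_gi (h : memHs N s u) : Integrable (Gi N s u) volume := h.2

lemma memHs_sub (hu : memHs N s u) (hv : memHs N s v) :
    memHs N s (fun x => u x - v x) := by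
  refine memHs_of (hu.1.sub hv.1) ?_
  have h2u : Integrable (Gi N s u) volume := hu.2
  have h2v : Integrable (Gi N s v) volume := hv.2
  refine Integrable.mono' (g := fun p => 2 * Gi N s u p + 2 * Gi N s v p)
    (by exact (h2u.const_mul 2).add (h2v.const_mul 2))
    (aesm_Gi ((hu.1.aestronglyMeasurable).sub hv.1.aestronglyMeasurable)) ?_
  refine Eventually.of_forall fun p => ?_
  have hK := Kk_nonneg (N := N) (s := s) p
  have h0 : (0:ℝ) ≤ Gi N s (fun x => u x - v x) p := Gi_nonneg p
  show ‖Gi N s (fun x => u x - v x) p‖ ≤ 2 * Gi N s u p + 2 * Gi N s v p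
  rw [Real.norm_eq_abs, abs_of_nonneg h0]
  have h1 : ((u p.1 - v p.1) - (u p.2 - v p.2)) ^ 2 ≤
      2 * (u p.1 - u p.2) ^ 2 + 2 * (v p.1 - v p.2) ^ 2 := by
    nlinarith [sq_nonneg ((u p.1 - u p.2) + (v p.1 - v p.2))]
  calc Gi N s (fun x => u x - v x) p
      = ((u p.1 - v p.1) - (u p.2 - v p.2)) ^ 2 / Kk N s p := by simp only [Gi]
    _ ≤ (2 * (u p.1 - u p.2) ^ 2 + 2 * (v p.1 - v p.2) ^ 2) / Kk N s p :=
        div_le_div_nonneg h1 hK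
    _ = 2 * Gi N s u p + 2 * Gi N s v p := by simp only [Gi]; rw [add_div]; ring

lemma Gi_smul (c : ℝ) (p : Vec N × Vec N) :
    Gi N s (fun x => c * u x) p = c ^ 2 * Gi N s u p := by
  simp only [Gi]; ring

lemma memHs_smul (hu : memHs N s u) (c : ℝ) : memHs N s (fun x => c * u x) := by
  refine memHs_of (hu.1.const_mul c) ?_
  have h2u : Integrable (Gi N s u) volume := hu.2
  exact (h2u.const_mul (c ^ 2)).congr
    (Eventually.of_forall fun p => (Gi_smul c p).symm)

lemma Gi_abs_le (p : Vec N × Vec N) :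
    Gi N s (fun x => |u x|) p ≤ Gi N s u p := by
  have hK := Kk_nonneg (N := N) (s := s) p
  have h1 : (|u p.1| - |u p.2|) ^ 2 ≤ (u p.1 - u p.2) ^ 2 := by
    nlinarith [sq_abs (u p.1), sq_abs (u p.2), le_abs_self (u p.1 * u p.2),
      abs_mul (u p.1) (u p.2)]
  simp only [Gi]
  exact div_le_div_nonneg h1 hK

lemma memHs_abs (hu : memHs N s u) : memHs N s (fun x => |u x|) := by
  have hL2 : MemLp (fun x => |u x|) 2 (volume : Measure (Vec N)) := by
    have := hu.1.norm
    simpa [Real.norm_eq_abs] using this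
  refine memHs_of hL2 ?_
  have h2u : Integrable (Gi N s u) volume := hu.2
  refine Integrable.mono' (g := Gi N s u) h2u (aesm_Gi hL2.aestronglyMeasurable) ?_
  refine Eventually.of_forall fun p => ?_
  have h0 : (0:ℝ) ≤ Gi N s (fun x => |u x|) p := Gi_nonneg p
  show ‖Gi N s (fun x => |u x|) p‖ ≤ Gi N s u p
  rw [Real.norm_eq_abs, abs_of_nonneg h0]
  exact Gi_abs_le p

lemma integrable_mul2 (hu : MemLp u 2 (volume : Measure (Vec N)))
    (hv : MemLp v 2 (volume : Measure (Vec N))) :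
    Integrable (fun x => u x * v x) volume := by
  refine Integrable.mono' (g := fun x => u x ^ 2 + v x ^ 2)
    (by exact hu.integrable_sq.add hv.integrable_sq)
    (hu.aestronglyMeasurable.mul hv.aestronglyMeasurable) ?_
  refine Eventually.of_forall fun x => ?_
  rw [Real.norm_eq_abs]
  show |u x * v x| ≤ u x ^ 2 + v x ^ 2
  refine abs_le.mpr ⟨?_, ?_⟩ <;> nlinarith [sq_nonneg (u x + v x), sq_nonneg (u x - v x)]

lemma sq_int_pos (hw : MemLp w 2 (volume : Measure (Vec N)))
    (hne : ¬ w =ᵐ[(volume : Measure (Vec N))] 0) :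
    0 < ∫ x, w x ^ 2 := by
  rcases lt_or_eq_of_le (integral_nonneg (f := fun x => w x ^ 2) fun x => sq_nonneg (w x)) with h | h
  · exact h
  · exfalso
    apply hne
    have := (integral_eq_zero_iff_of_nonneg_ae
      (Eventually.of_forall fun x => sq_nonneg (w x)) hw.integrable_sq).mp h.symm
    filter_upwards [this] with x hx
    have : w x ^ 2 = 0 := hx
    simpa [pow_eq_zero_iff] using this

def WeakEig (N : ℕ) (s β lam : ℝ) (g u : Vec N → ℝ) : Prop :=
  memHs N s u ∧ ∀ φ : Vec N → ℝ, memHs N s φ →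
    (∫ p : Vec N × Vec N,
        (u p.1 - u p.2) * (φ p.1 - φ p.2) / ‖p.1 - p.2‖ ^ ((N : ℝ) + 2 * s)) +
      β * ∫ x : Vec N, g x * u x * φ x = lam * ∫ x : Vec N, u x * φ x

lemma int_const_mul {α : Type*} {m : MeasurableSpace α} (μ : Measure α) (c : ℝ) (f : α → ℝ) :
    ∫ x, c * f x ∂μ = c * ∫ x, f x ∂μ := by
  simpa [smul_eq_mul] using integral_smul c f

lemma gag_nonneg : 0 ≤ gagliardo N s u :=
  integral_nonneg fun p => div_nonneg (sq_nonneg _) (Real.rpow_nonneg (norm_nonneg _) _)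

lemma Phi_nonneg (hg01 : ∀ x, 0 ≤ g x ∧ g x ≤ 1) (hβ : 0 < β) (u : Vec N → ℝ) :
    0 ≤ Phi N s β g u :=
  add_nonneg gag_nonneg
    (mul_nonneg hβ.le (integral_nonneg fun x => mul_nonneg (hg01 x).1 (sq_nonneg _)))

lemma lambda1_le (hg01 : ∀ x, 0 ≤ g x ∧ g x ≤ 1) (hβ : 0 < β)
    (hw : w ∈ SigmaSet N s) : lambda1 N s β g ≤ Phi N s β g w :=
  csInf_le ⟨0, fun c hc => by
    obtain ⟨z, _, rfl⟩ := hc; exact Phi_nonneg hg01 hβ z⟩ ⟨w, hw, rfl⟩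

lemma gagliardo_smul (t : ℝ) :
    gagliardo N s (fun x => t * w x) = t ^ 2 * gagliardo N s w := by
  rw [gagliardo_eq, gagliardo_eq]
  simp_rw [Gi_smul]
  exact int_const_mul _ _ _

lemma lambda1_ratio (hg01 : ∀ x, 0 ≤ g x ∧ g x ≤ 1) (hβ : 0 < β)
    (hw : memHs N s w) (hpos : 0 < ∫ x, w x ^ 2) :
    lambda1 N s β g * ∫ x, w x ^ 2 ≤ Phi N s β g w := by
  set c := ∫ x, w x ^ 2 with hc
  set t : ℝ := (Real.sqrt c)⁻¹ with htdef
  have ht2 : t ^ 2 = c⁻¹ := by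
    rw [htdef, inv_pow, Real.sq_sqrt hpos.le]
  have hmem : memHs N s (fun x => t * w x) := memHs_smul hw t
  have hsq : ∫ x, (t * w x) ^ 2 = 1 := by
    have e : (fun x => (t * w x) ^ 2) =ᵐ[(volume : Measure (Vec N))]
        fun x => t ^ 2 * w x ^ 2 := Eventually.of_forall fun x => by ring
    rw [integral_congr_ae e, int_const_mul, ht2]
    exact inv_mul_cancel₀ hpos.ne'
  have e2 : ∫ x, g x * (t * w x) ^ 2 = t ^ 2 * ∫ x, g x * w x ^ 2 := by
    have e : (fun x => g x * (t * w x) ^ 2) =ᵐ[(volume : Measure (Vec N))]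
        fun x => t ^ 2 * (g x * w x ^ 2) := Eventually.of_forall fun x => by ring
    rw [integral_congr_ae e, int_const_mul]
  have hPhi : Phi N s β g (fun x => t * w x) = t ^ 2 * Phi N s β g w := by
    rw [Phi, Phi, gagliardo_smul, e2]; ring
  have h1 : lambda1 N s β g ≤ t ^ 2 * Phi N s β g w := by
    rw [← hPhi]; exact lambda1_le hg01 hβ ⟨hmem, hsq⟩
  rw [ht2] at h1
  calc lambda1 N s β g * c ≤ (c⁻¹ * Phi N s β g w) * c :=
        mul_le_mul_of_nonneg_right h1 hpos.le
    _ = Phi N s β g w := by field_simp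

lemma eigen_self (hu : WeakEig N s β lam g u) :
    Phi N s β g u = lam * ∫ x, u x ^ 2 := by
  have h := hu.2 u hu.1
  have c1 : (∫ p : Vec N × Vec N,
      (u p.1 - u p.2) * (u p.1 - u p.2) / ‖p.1 - p.2‖ ^ ((N : ℝ) + 2 * s)) =
      gagliardo N s u := by
    rw [gagliardo]
    exact integral_congr_ae (Eventually.of_forall fun p => by simp only [pow_two])
  have c2 : (∫ x : Vec N, g x * u x * u x) = ∫ x : Vec N, g x * u x ^ 2 :=
    integral_congr_ae (Eventually.of_forall fun x => by ring)
  have c3 : (∫ x : Vec N, u x * u x) = ∫ x : Vec N, u x ^ 2 :=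
    integral_congr_ae (Eventually.of_forall fun x => by ring)
  rw [c1, c2, c3] at h
  rw [Phi]; exact h

lemma diag_null (hN : 0 < N) :
    (volume : Measure (Vec N × Vec N)) {p | p.1 = p.2} = 0 := by
  haveI : Nontrivial (Vec N) := ⟨⟨EuclideanSpace.single ⟨0, hN⟩ (1 : ℝ), 0, by
    intro h
    have := congrArg (fun f : Vec N => f ⟨0, hN⟩) h
    simp [EuclideanSpace.single_apply] at this⟩⟩
  rw [Measure.volume_eq_prod]
  have hm : MeasurableSet {p : Vec N × Vec N | p.1 = p.2} :=
    (isClosed_eq continuous_fst continuous_snd).measurableSet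
  rw [Measure.prod_apply hm]
  have hz : ∀ x : Vec N,
      (volume (Prod.mk x ⁻¹' {p : Vec N × Vec N | p.1 = p.2})) = 0 := by
    intro x
    have : (Prod.mk x ⁻¹' {p : Vec N × Vec N | p.1 = p.2}) = {x} := by
      ext y; simp [eq_comm]
    rw [this]
    exact measure_singleton x
  simp [hz]

lemma ae_offdiag (hN : 0 < N) : ∀ᵐ p : Vec N × Vec N, p.1 ≠ p.2 := by
  rw [ae_iff]
  simpa only [ne_eq, not_not] using diag_null hN

lemma Kk_pos {p : Vec N × Vec N} (h : p.1 ≠ p.2) : 0 < Kk N s p :=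
  Real.rpow_pos_of_pos (norm_pos_iff.mpr (sub_ne_zero.mpr h)) _

lemma sign_lemma (hN : 0 < N) (hg01 : ∀ x, 0 ≤ g x ∧ g x ≤ 1) (hβ : 0 < β)
    (hw : memHs N s w)
    (heq : Phi N s β g w = lambda1 N s β g * ∫ x, w x ^ 2)
    (hne : ¬ w =ᵐ[(volume : Measure (Vec N))] 0) :
    (∀ᵐ x : Vec N, 0 ≤ w x) ∨ (∀ᵐ x : Vec N, w x ≤ 0) := by
  have hpos : 0 < ∫ x, w x ^ 2 := sq_int_pos hw.1 hne
  have hwa : memHs N s (fun x => |w x|) := memHs_abs hw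
  have h2 : ∫ x, (|w x|) ^ 2 = ∫ x, w x ^ 2 :=
    integral_congr_ae (Eventually.of_forall fun x => by simp only [sq_abs])
  have hg2 : ∫ x, g x * (|w x|) ^ 2 = ∫ x, g x * w x ^ 2 :=
    integral_congr_ae (Eventually.of_forall fun x => by simp only [sq_abs])
  have h2w : Integrable (Gi N s w) volume := hw.2
  have h2wa : Integrable (Gi N s (fun x => |w x|)) volume := hwa.2
  have hle : gagliardo N s (fun x => |w x|) ≤ gagliardo N s w := by
    rw [gagliardo_eq, gagliardo_eq]
    exact integral_mono h2wa h2w fun p => Gi_abs_le p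
  have hge : lambda1 N s β g * ∫ x, w x ^ 2 ≤ Phi N s β g (fun x => |w x|) := by
    have := lambda1_ratio hg01 hβ hwa (by rw [h2]; exact hpos)
    rwa [h2] at this
  have heq2 : gagliardo N s (fun x => |w x|) = gagliardo N s w := by
    have h3 : Phi N s β g (fun x => |w x|) ≤ Phi N s β g w := by
      rw [Phi, Phi, hg2]; linarith
    have h4 : Phi N s β g w ≤ Phi N s β g (fun x => |w x|) := by rw [heq]; exact hge
    have h5 : Phi N s β g (fun x => |w x|) = Phi N s β g w := le_antisymm h3 h4
    rw [Phi, Phi, hg2] at h5; linarith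
  -- integral of nonneg difference is zero
  have hdiffint : Integrable (fun p => Gi N s w p - Gi N s (fun x => |w x|) p) volume :=
    h2w.sub h2wa
  have hdiff0 : ∫ p, (Gi N s w p - Gi N s (fun x => |w x|) p) = 0 := by
    rw [integral_sub h2w h2wa]
    rw [← gagliardo_eq, ← gagliardo_eq, heq2, sub_self]
  have hae : ∀ᵐ p : Vec N × Vec N, Gi N s w p - Gi N s (fun x => |w x|) p = 0 := by
    have := (integral_eq_zero_iff_of_nonneg_ae
      (Eventually.of_forall fun p => sub_nonneg.mpr (Gi_abs_le p)) hdiffint).mp hdiff0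
    filter_upwards [this] with p hp using hp
  have key : ∀ᵐ p : Vec N × Vec N, 0 ≤ w p.1 * w p.2 := by
    filter_upwards [hae, ae_offdiag hN] with p h1 h2
    have hK : 0 < Kk N s p := Kk_pos h2
    have hnum : (w p.1 - w p.2) ^ 2 = (|w p.1| - |w p.2|) ^ 2 := by
      have h1' : Gi N s w p = Gi N s (fun x => |w x|) p := by linarith
      simp only [Gi] at h1'
      have := (div_eq_div_iff hK.ne' hK.ne').mp h1'
      exact mul_right_cancel₀ hK.ne' this
    have e : w p.1 * w p.2 = |w p.1| * |w p.2| := by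
      nlinarith [sq_abs (w p.1), sq_abs (w p.2)]
    rw [e]
    positivity
  -- pass to a measurable representative
  set A := hw.1.aestronglyMeasurable with hA
  set w' := A.mk w with hw'
  have hmeas : Measurable w' := A.stronglyMeasurable_mk.measurable
  have haew : w =ᵐ[(volume : Measure (Vec N))] w' := A.ae_eq_mk
  have key' : ∀ᵐ p : Vec N × Vec N, 0 ≤ w' p.1 * w' p.2 := by
    filter_upwards [key, ae_fst haew, ae_snd haew] with p h1 h2 h3
    rw [← h2, ← h3]; exact h1
  have hPQ : volume {x : Vec N | 0 < w' x} * volume {x : Vec N | w' x < 0} = 0 := by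
    have hP : MeasurableSet {x : Vec N | 0 < w' x} := measurableSet_lt measurable_const hmeas
    have hQ : MeasurableSet {x : Vec N | w' x < 0} := measurableSet_lt hmeas measurable_const
    have hsub : {x : Vec N | 0 < w' x} ×ˢ {x : Vec N | w' x < 0} ⊆
        {p : Vec N × Vec N | ¬ 0 ≤ w' p.1 * w' p.2} := by
      rintro ⟨x, y⟩ ⟨hx, hy⟩
      simp only [Set.mem_setOf_eq, not_le]
      exact mul_neg_of_pos_of_neg hx hy
    have h0 : (volume : Measure (Vec N × Vec N)) {p | ¬ 0 ≤ w' p.1 * w' p.2} = 0 := by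
      rw [ae_iff] at key'; exact key'
    have := measure_mono_null hsub h0
    rw [Measure.volume_eq_prod, Measure.prod_prod] at this
    exact this
  rcases mul_eq_zero.mp hPQ with h | h
  · right
    have : ∀ᵐ x : Vec N, ¬ 0 < w' x := by rw [ae_iff]; simpa using h
    filter_upwards [this, haew] with x hx he
    rw [he]; exact le_of_not_gt hx
  · left
    have : ∀ᵐ x : Vec N, ¬ w' x < 0 := by rw [ae_iff]; simpa using h
    filter_upwards [this, haew] with x hx he
    rw [he]; exact le_of_not_gt hx

lemma integrable_gmul (hgm : Measurable g) (hg01 : ∀ x, 0 ≤ g x ∧ g x ≤ 1)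
    (hu : MemLp u 2 (volume : Measure (Vec N))) (hv : MemLp v 2 (volume : Measure (Vec N))) :
    Integrable (fun x => g x * u x * v x) volume := by
  have hi := integrable_mul2 hu hv
  refine Integrable.mono' (g := fun x => |u x * v x|) hi.abs
    ((hgm.aestronglyMeasurable.mul hu.aestronglyMeasurable).mul hv.aestronglyMeasurable) ?_
  refine Eventually.of_forall fun x => ?_
  rw [Real.norm_eq_abs]
  show |g x * u x * v x| ≤ |u x * v x|
  calc |g x * u x * v x| = |g x| * |u x * v x| := by rw [mul_assoc, abs_mul]
    _ ≤ 1 * |u x * v x| := by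
        refine mul_le_mul_of_nonneg_right ?_ (abs_nonneg _)
        exact abs_le.mpr ⟨by linarith [(hg01 x).1], (hg01 x).2⟩
    _ = |u x * v x| := one_mul _

lemma weak_sub (hgm : Measurable g) (hg01 : ∀ x, 0 ≤ g x ∧ g x ≤ 1)
    (hv : WeakEig N s β lam g v) (hu : WeakEig N s β lam g u) (χ : ℝ) :
    WeakEig N s β lam g (fun x => v x - χ * u x) := by
  have hmem : memHs N s (fun x => v x - χ * u x) := memHs_sub hv.1 (memHs_smul hu.1 χ)
  refine ⟨hmem, fun φ hφ => ?_⟩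
  have e1 := hv.2 φ hφ
  have e2 := hu.2 φ hφ
  have hCv : Integrable (fun p : Vec N × Vec N =>
      (v p.1 - v p.2) * (φ p.1 - φ p.2) / ‖p.1 - p.2‖ ^ ((N : ℝ) + 2 * s)) volume :=
    integrable_Ci hv.1 hφ
  have hCu : Integrable (fun p : Vec N × Vec N =>
      (u p.1 - u p.2) * (φ p.1 - φ p.2) / ‖p.1 - p.2‖ ^ ((N : ℝ) + 2 * s)) volume :=
    integrable_Ci hu.1 hφ
  have c1 : (∫ p : Vec N × Vec N,
      (v p.1 - χ * u p.1 - (v p.2 - χ * u p.2)) * (φ p.1 - φ p.2) /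
        ‖p.1 - p.2‖ ^ ((N : ℝ) + 2 * s)) =
      (∫ p : Vec N × Vec N,
        (v p.1 - v p.2) * (φ p.1 - φ p.2) / ‖p.1 - p.2‖ ^ ((N : ℝ) + 2 * s)) -
      χ * ∫ p : Vec N × Vec N,
        (u p.1 - u p.2) * (φ p.1 - φ p.2) / ‖p.1 - p.2‖ ^ ((N : ℝ) + 2 * s) := by
    have e : (fun p : Vec N × Vec N =>
        (v p.1 - χ * u p.1 - (v p.2 - χ * u p.2)) * (φ p.1 - φ p.2) /
          ‖p.1 - p.2‖ ^ ((N : ℝ) + 2 * s)) =ᵐ[(volume : Measure (Vec N × Vec N))]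
        fun p => (v p.1 - v p.2) * (φ p.1 - φ p.2) / ‖p.1 - p.2‖ ^ ((N : ℝ) + 2 * s) -
          χ * ((u p.1 - u p.2) * (φ p.1 - φ p.2) / ‖p.1 - p.2‖ ^ ((N : ℝ) + 2 * s)) :=
      Eventually.of_forall fun p => by ring
    rw [integral_congr_ae e, integral_sub hCv (hCu.const_mul χ), int_const_mul]
  have hgv : Integrable (fun x => g x * v x * φ x) volume :=
    integrable_gmul hgm hg01 hv.1.1 hφ.1
  have hgu : Integrable (fun x => g x * u x * φ x) volume :=
    integrable_gmul hgm hg01 hu.1.1 hφ.1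
  have c2 : (∫ x : Vec N, g x * (v x - χ * u x) * φ x) =
      (∫ x : Vec N, g x * v x * φ x) - χ * ∫ x : Vec N, g x * u x * φ x := by
    have e : (fun x : Vec N => g x * (v x - χ * u x) * φ x) =ᵐ[(volume : Measure (Vec N))]
        fun x => g x * v x * φ x - χ * (g x * u x * φ x) :=
      Eventually.of_forall fun x => by ring
    rw [integral_congr_ae e, integral_sub hgv (hgu.const_mul χ), int_const_mul]
  have hvφ : Integrable (fun x => v x * φ x) volume := integrable_mul2 hv.1.1 hφ.1
  have huφ : Integrable (fun x => u x * φ x) volume := integrable_mul2 hu.1.1 hφ.1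
  have c3 : (∫ x : Vec N, (v x - χ * u x) * φ x) =
      (∫ x : Vec N, v x * φ x) - χ * ∫ x : Vec N, u x * φ x := by
    have e : (fun x : Vec N => (v x - χ * u x) * φ x) =ᵐ[(volume : Measure (Vec N))]
        fun x => v x * φ x - χ * (u x * φ x) :=
      Eventually.of_forall fun x => by ring
    rw [integral_congr_ae e, integral_sub hvφ (huφ.const_mul χ), int_const_mul]
  rw [c1, c2, c3]
  linear_combination e1 - χ * e2

lemma weak_smul (hgm : Measurable g) (hg01 : ∀ x, 0 ≤ g x ∧ g x ≤ 1)
    (hu : WeakEig N s β lam g u) (c : ℝ) :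
    WeakEig N s β lam g (fun x => c * u x) := by
  refine ⟨memHs_smul hu.1 c, fun φ hφ => ?_⟩
  have e2 := hu.2 φ hφ
  have hCu : Integrable (fun p : Vec N × Vec N =>
      (u p.1 - u p.2) * (φ p.1 - φ p.2) / ‖p.1 - p.2‖ ^ ((N : ℝ) + 2 * s)) volume :=
    integrable_Ci hu.1 hφ
  have c1 : (∫ p : Vec N × Vec N,
      (c * u p.1 - c * u p.2) * (φ p.1 - φ p.2) / ‖p.1 - p.2‖ ^ ((N : ℝ) + 2 * s)) =
      c * ∫ p : Vec N × Vec N,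
        (u p.1 - u p.2) * (φ p.1 - φ p.2) / ‖p.1 - p.2‖ ^ ((N : ℝ) + 2 * s) := by
    have e : (fun p : Vec N × Vec N =>
        (c * u p.1 - c * u p.2) * (φ p.1 - φ p.2) / ‖p.1 - p.2‖ ^ ((N : ℝ) + 2 * s))
        =ᵐ[(volume : Measure (Vec N × Vec N))]
        fun p => c * ((u p.1 - u p.2) * (φ p.1 - φ p.2) / ‖p.1 - p.2‖ ^ ((N : ℝ) + 2 * s)) :=
      Eventually.of_forall fun p => by ring
    rw [integral_congr_ae e, int_const_mul]
  have c2 : (∫ x : Vec N, g x * (c * u x) * φ x) = c * ∫ x : Vec N, g x * u x * φ x := by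
    have e : (fun x : Vec N => g x * (c * u x) * φ x) =ᵐ[(volume : Measure (Vec N))]
        fun x => c * (g x * u x * φ x) := Eventually.of_forall fun x => by ring
    rw [integral_congr_ae e, int_const_mul]
  have c3 : (∫ x : Vec N, (c * u x) * φ x) = c * ∫ x : Vec N, u x * φ x := by
    have e : (fun x : Vec N => (c * u x) * φ x) =ᵐ[(volume : Measure (Vec N))]
        fun x => c * (u x * φ x) := Eventually.of_forall fun x => by ring
    rw [integral_congr_ae e, int_const_mul]
  rw [c1, c2, c3]
  linear_combination c * e2

lemma core (hN : 0 < N)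
    (hu : WeakEig N s β lam g u) (hw : WeakEig N s β lam g w)
    (hun : ¬ u =ᵐ[(volume : Measure (Vec N))] 0)
    (husign : ∀ᵐ x : Vec N, 0 ≤ u x) (hwsign : ∀ᵐ x : Vec N, 0 ≤ w x)
    (horth : ∫ x : Vec N, u x * w x = 0) :
    w =ᵐ[(volume : Measure (Vec N))] 0 := by
  have huw : Integrable (fun x => u x * w x) volume := integrable_mul2 hu.1.1 hw.1.1
  have uw0 : ∀ᵐ x : Vec N, u x * w x = 0 := by
    have h := (integral_eq_zero_iff_of_nonneg_ae
      (by filter_upwards [husign, hwsign] with x h1 h2 using mul_nonneg h1 h2) huw).mp horth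
    filter_upwards [h] with x hx using hx
  have hgw0 : ∫ x : Vec N, g x * u x * w x = 0 := by
    apply integral_eq_zero_of_ae
    filter_upwards [uw0] with x hx
    show g x * u x * w x = 0
    rw [mul_assoc, hx, mul_zero]
  have hcross : (∫ p : Vec N × Vec N,
      (u p.1 - u p.2) * (w p.1 - w p.2) / ‖p.1 - p.2‖ ^ ((N : ℝ) + 2 * s)) = 0 := by
    have h := hu.2 w hw.1
    rw [horth, hgw0] at h
    linarith
  have hCuw : Integrable (Ci N s u w) volume := integrable_Ci hu.1 hw.1
  have hTae : (fun p : Vec N × Vec N => - Ci N s u w p) =ᵐ[(volume : Measure (Vec N × Vec N))]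
      (fun p : Vec N × Vec N => u p.1 * w p.2 / Kk N s p + u p.2 * w p.1 / Kk N s p) := by
    filter_upwards [ae_fst uw0, ae_snd uw0] with p h1 h2
    have hnum : (u p.1 - u p.2) * (w p.1 - w p.2) = -(u p.1 * w p.2 + u p.2 * w p.1) := by
      linear_combination h1 + h2
    show -Ci N s u w p = u p.1 * w p.2 / Kk N s p + u p.2 * w p.1 / Kk N s p
    simp only [Ci]
    rw [hnum]
    ring
  have hTint : Integrable
      (fun p : Vec N × Vec N => u p.1 * w p.2 / Kk N s p + u p.2 * w p.1 / Kk N s p) volume :=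
    (hCuw.neg).congr hTae
  have hCi0 : ∫ p, Ci N s u w p = 0 := hcross
  have hTint0 : (∫ p : Vec N × Vec N,
      (u p.1 * w p.2 / Kk N s p + u p.2 * w p.1 / Kk N s p)) = 0 := by
    rw [← integral_congr_ae hTae, integral_neg, hCi0, neg_zero]
  have hTnonneg : ∀ᵐ p : Vec N × Vec N,
      0 ≤ u p.1 * w p.2 / Kk N s p + u p.2 * w p.1 / Kk N s p := by
    filter_upwards [ae_fst husign, ae_snd husign, ae_fst hwsign, ae_snd hwsign]
      with p h1 h2 h3 h4
    have hK := Kk_nonneg (N := N) (s := s) p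
    exact add_nonneg (div_nonneg (mul_nonneg h1 h4) hK) (div_nonneg (mul_nonneg h2 h3) hK)
  have hT0 : ∀ᵐ p : Vec N × Vec N,
      u p.1 * w p.2 / Kk N s p + u p.2 * w p.1 / Kk N s p = 0 := by
    have h := (integral_eq_zero_iff_of_nonneg_ae hTnonneg hTint).mp hTint0
    filter_upwards [h] with p hp using hp
  have hprod0 : ∀ᵐ p : Vec N × Vec N, u p.1 * w p.2 = 0 := by
    filter_upwards [hT0, ae_offdiag hN, ae_fst husign, ae_snd husign,
      ae_fst hwsign, ae_snd hwsign] with p h0 hne h1 h2 h3 h4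
    have hK := Kk_pos (s := s) hne
    have t1 : 0 ≤ u p.1 * w p.2 / Kk N s p := div_nonneg (mul_nonneg h1 h4) hK.le
    have t2 : 0 ≤ u p.2 * w p.1 / Kk N s p := div_nonneg (mul_nonneg h2 h3) hK.le
    have hz : u p.1 * w p.2 / Kk N s p = 0 := by linarith
    exact (div_eq_zero_iff.mp hz).resolve_right hK.ne'
  -- pass to measurable representatives
  set A := hu.1.1.aestronglyMeasurable with hA
  set B := hw.1.1.aestronglyMeasurable with hB
  have hmu : Measurable (A.mk u) := A.stronglyMeasurable_mk.measurable
  have hmw : Measurable (B.mk w) := B.stronglyMeasurable_mk.measurable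
  have haeu : u =ᵐ[(volume : Measure (Vec N))] A.mk u := A.ae_eq_mk
  have haew : w =ᵐ[(volume : Measure (Vec N))] B.mk w := B.ae_eq_mk
  have hprod0' : ∀ᵐ p : Vec N × Vec N, A.mk u p.1 * B.mk w p.2 = 0 := by
    filter_upwards [hprod0, ae_fst haeu, ae_snd haew] with p h0 h1 h2
    rw [← h1, ← h2]; exact h0
  have hPQ : volume {x : Vec N | A.mk u x ≠ 0} * volume {x : Vec N | B.mk w x ≠ 0} = 0 := by
    have hP : MeasurableSet {x : Vec N | A.mk u x ≠ 0} :=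
      (measurableSet_eq_fun hmu measurable_const).compl
    have hQ : MeasurableSet {x : Vec N | B.mk w x ≠ 0} :=
      (measurableSet_eq_fun hmw measurable_const).compl
    have hsub : {x : Vec N | A.mk u x ≠ 0} ×ˢ {x : Vec N | B.mk w x ≠ 0} ⊆
        {p : Vec N × Vec N | ¬ A.mk u p.1 * B.mk w p.2 = 0} := by
      rintro ⟨x, y⟩ ⟨hx, hy⟩
      exact mul_ne_zero hx hy
    have h0 : (volume : Measure (Vec N × Vec N))
        {p | ¬ A.mk u p.1 * B.mk w p.2 = 0} = 0 := by
      rw [ae_iff] at hprod0'; exact hprod0'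
    have := measure_mono_null hsub h0
    rw [Measure.volume_eq_prod, Measure.prod_prod] at this
    exact this
  rcases mul_eq_zero.mp hPQ with h | h
  · exfalso
    apply hun
    have : ∀ᵐ x : Vec N, ¬ A.mk u x ≠ 0 := by rw [ae_iff]; simpa using h
    filter_upwards [this, haeu] with x hx he
    show u x = 0
    rw [he]; exact not_not.mp hx
  · have : ∀ᵐ x : Vec N, ¬ B.mk w x ≠ 0 := by rw [ae_iff]; simpa using h
    filter_upwards [this, haew] with x hx he
    show w x = 0
    rw [he]; exact not_not.mp hx

end Aux

/-- if `λ₁` is an eigenvalue, it is simple: any two associated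
eigenfunctions are proportional (a.e.). -/
theorem lambda1_simple (N : ℕ) (s β : ℝ) (hs : s ∈ Set.Ioo (0 : ℝ) 1)
    (hN : 2 * s < N) (hβ : 0 < β) (g : Vec N → ℝ) (hg : g1cond N g)
    (u v : Vec N → ℝ)
    (hu : IsEigenpair N s β g (lambda1 N s β g) u)
    (hv : IsEigenpair N s β g (lambda1 N s β g) v) :
    ∃ χ : ℝ, v =ᵐ[(volume : Measure (Vec N))] fun x => χ * u x := by
  classical
  obtain ⟨hgm, hg01, -, -⟩ := hg
  have hN0 : 0 < N := by
    have h1 : (0 : ℝ) < N := by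
      have := hs.1
      linarith
    exact_mod_cast h1
  have huW : Aux.WeakEig N s β (lambda1 N s β g) g u := ⟨hu.1, hu.2.2⟩
  have hvW : Aux.WeakEig N s β (lambda1 N s β g) g v := ⟨hv.1, hv.2.2⟩
  have hu2pos : 0 < ∫ x : Vec N, u x ^ 2 := Aux.sq_int_pos hu.1.1 hu.2.1
  set χ := (∫ x : Vec N, u x * v x) / (∫ x : Vec N, u x ^ 2) with hχ
  by_cases hw0 : (fun x : Vec N => v x - χ * u x) =ᵐ[(volume : Measure (Vec N))] 0
  · refine ⟨χ, ?_⟩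
    filter_upwards [hw0] with x hx
    have hx' : v x - χ * u x = 0 := hx
    show v x = χ * u x
    linarith
  · exfalso
    have hwW : Aux.WeakEig N s β (lambda1 N s β g) g (fun x => v x - χ * u x) :=
      Aux.weak_sub hgm hg01 hvW huW χ
    have husign := Aux.sign_lemma hN0 hg01 hβ hu.1 (Aux.eigen_self huW) hu.2.1
    have hwsign := Aux.sign_lemma hN0 hg01 hβ hwW.1 (Aux.eigen_self hwW) hw0
    have hiv : Integrable (fun x => u x * v x) volume := Aux.integrable_mul2 hu.1.1 hv.1.1
    have hiu : Integrable (fun x => u x * u x) volume := Aux.integrable_mul2 hu.1.1 hu.1.1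
    have huu : (∫ x : Vec N, u x * u x) = ∫ x : Vec N, u x ^ 2 :=
      integral_congr_ae (Filter.Eventually.of_forall fun x => by ring)
    have horth : ∫ x : Vec N, u x * (v x - χ * u x) = 0 := by
      have e : (fun x : Vec N => u x * (v x - χ * u x)) =ᵐ[(volume : Measure (Vec N))]
          fun x => u x * v x - χ * (u x * u x) :=
        Filter.Eventually.of_forall fun x => by ring
      rw [integral_congr_ae e, integral_sub hiv (hiu.const_mul χ), Aux.int_const_mul, huu, hχ,
        div_mul_cancel₀ _ hu2pos.ne', sub_self]
    obtain ⟨a, ha, hau⟩ : ∃ a : ℝ, (a = 1 ∨ a = -1) ∧ ∀ᵐ x : Vec N, 0 ≤ a * u x := by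
      rcases husign with h | h
      · exact ⟨1, Or.inl rfl, by filter_upwards [h] with x hx; linarith⟩
      · exact ⟨-1, Or.inr rfl, by filter_upwards [h] with x hx; linarith⟩
    obtain ⟨b, hb, hbw⟩ : ∃ b : ℝ, (b = 1 ∨ b = -1) ∧
        ∀ᵐ x : Vec N, 0 ≤ b * (v x - χ * u x) := by
      rcases hwsign with h | h
      · exact ⟨1, Or.inl rfl, by filter_upwards [h] with x hx; linarith⟩
      · exact ⟨-1, Or.inr rfl, by filter_upwards [h] with x hx; linarith⟩
    have ha0 : a ≠ 0 := by rcases ha with h | h <;> rw [h] <;> norm_num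
    have hb0 : b ≠ 0 := by rcases hb with h | h <;> rw [h] <;> norm_num
    have hUW := Aux.weak_smul hgm hg01 huW a
    have hWW := Aux.weak_smul hgm hg01 hwW b
    have hUn : ¬ (fun x : Vec N => a * u x) =ᵐ[(volume : Measure (Vec N))] 0 := by
      intro h
      apply hu.2.1
      filter_upwards [h] with x hx
      have hx' : a * u x = 0 := hx
      show u x = 0
      rcases mul_eq_zero.mp hx' with h' | h'
      · exact absurd h' ha0
      · exact h'
    have horth2 : ∫ x : Vec N, (a * u x) * (b * (v x - χ * u x)) = 0 := by
      have e : (fun x : Vec N => (a * u x) * (b * (v x - χ * u x)))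
          =ᵐ[(volume : Measure (Vec N))]
          fun x => (a * b) * (u x * (v x - χ * u x)) :=
        Filter.Eventually.of_forall fun x => by ring
      rw [integral_congr_ae e, Aux.int_const_mul, horth, mul_zero]
    have hfin := Aux.core hN0 hUW hWW hUn hau hbw horth2
    apply hw0
    filter_upwards [hfin] with x hx
    have hx' : b * (v x - χ * u x) = 0 := hx
    show v x - χ * u x = 0
    rcases mul_eq_zero.mp hx' with h' | h'
    · exact absurd h' hb0
    · exact h'
end
end

section
/- Assume λ₁ = inf_{u ∈ Σ} Φ(u) is an eigenvalue of L_β. If φ is an eigenfunction of L_β associated with an eigenvalue λ ≠ λ₁, then φ changes sign: both its positive part φ₊ = max{φ,0} and its negative part φ₋ = max{−φ,0} are nonzero on sets of positive Lebesgue measure. -/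
open MeasureTheory Filter Topology

noncomputable section

/-! ### Auxiliary lemmas -/

section Aux

variable {N : ℕ} {s β : ℝ} {g : Vec N → ℝ}

private lemma div_le_div_aux' (a b c : ℝ) (h : a ≤ b) (hc : 0 ≤ c) : a / c ≤ b / c := by
  gcongr

private lemma ker_nonneg (p : Vec N × Vec N) : (0:ℝ) ≤ ‖p.1 - p.2‖ ^ ((N : ℝ) + 2 * s) :=
  Real.rpow_nonneg (norm_nonneg _) _

private lemma gag_integrand_nonneg (u : Vec N → ℝ) (p : Vec N × Vec N) :
    0 ≤ (u p.1 - u p.2) ^ 2 / ‖p.1 - p.2‖ ^ ((N : ℝ) + 2 * s) :=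
  div_nonneg (sq_nonneg _) (ker_nonneg p)

private lemma gagliardo_nonneg (u : Vec N → ℝ) : 0 ≤ gagliardo N s u :=
  integral_nonneg fun p => gag_integrand_nonneg u p

private lemma phi_nonneg (hβ : 0 < β) (hg1 : ∀ x, 0 ≤ g x) (u : Vec N → ℝ) :
    0 ≤ Phi N s β g u :=
  add_nonneg (gagliardo_nonneg u)
    (mul_nonneg hβ.le (integral_nonneg fun x => mul_nonneg (hg1 x) (sq_nonneg _)))

private lemma lambda1_le (hβ : 0 < β) (hg1 : ∀ x, 0 ≤ g x) {u : Vec N → ℝ}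
    (hu : memHs N s u) (ht : 0 < ∫ x : Vec N, u x ^ 2) :
    lambda1 N s β g * (∫ x : Vec N, u x ^ 2) ≤ Phi N s β g u := by
  set t := ∫ x : Vec N, u x ^ 2 with htdef
  set c : ℝ := (Real.sqrt t)⁻¹ with hcdef
  have hc2 : c ^ 2 = t⁻¹ := by rw [hcdef, inv_pow, Real.sq_sqrt ht.le]
  set v : Vec N → ℝ := fun x => c * u x with hvdef
  have hint : ∀ p : Vec N × Vec N,
      (v p.1 - v p.2) ^ 2 / ‖p.1 - p.2‖ ^ ((N : ℝ) + 2 * s)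
        = c ^ 2 * ((u p.1 - u p.2) ^ 2 / ‖p.1 - p.2‖ ^ ((N : ℝ) + 2 * s)) := by
    intro p; rw [hvdef]; ring
  have hgagv : gagliardo N s v = c ^ 2 * gagliardo N s u := by
    unfold gagliardo; simp_rw [hint]; exact integral_const_mul _ _
  have hmem : memHs N s v := ⟨hu.1.const_mul c, by simp_rw [hint]; exact hu.2.const_mul _⟩
  have hsq : ∀ x, v x ^ 2 = c ^ 2 * u x ^ 2 := fun x => by rw [hvdef]; ring
  have hL2 : (∫ x : Vec N, v x ^ 2) = 1 := by
    simp_rw [hsq]; rw [integral_const_mul, hc2, ← htdef, inv_mul_cancel₀ ht.ne']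
  have hgv : (∫ x : Vec N, g x * v x ^ 2) = c ^ 2 * ∫ x : Vec N, g x * u x ^ 2 := by
    rw [← integral_const_mul]; congr 1; funext x; rw [hsq]; ring
  have hvS : v ∈ SigmaSet N s := ⟨hmem, hL2⟩
  have hPhiv : Phi N s β g v = c ^ 2 * Phi N s β g u := by
    unfold Phi; rw [hgagv, hgv]; ring
  have hbdd : BddBelow (Phi N s β g '' SigmaSet N s) := by
    refine ⟨0, fun y hy => ?_⟩
    obtain ⟨w, -, rfl⟩ := hy
    exact phi_nonneg hβ hg1 w
  have h1 : lambda1 N s β g ≤ c ^ 2 * Phi N s β g u := by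
    rw [← hPhiv]; exact csInf_le hbdd ⟨v, hvS, rfl⟩
  have h2 : lambda1 N s β g * t ≤ (c ^ 2 * Phi N s β g u) * t :=
    mul_le_mul_of_nonneg_right h1 ht.le
  calc lambda1 N s β g * t ≤ (c ^ 2 * Phi N s β g u) * t := h2
    _ = Phi N s β g u := by rw [hc2]; field_simp

private lemma test_self {lam : ℝ} {u : Vec N → ℝ} (h : IsEigenpair N s β g lam u) :
    Phi N s β g u = lam * ∫ x : Vec N, u x ^ 2 := by
  have heq := h.2.2 u h.1
  have e1 : (∫ p : Vec N × Vec N,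
      (u p.1 - u p.2) * (u p.1 - u p.2) / ‖p.1 - p.2‖ ^ ((N : ℝ) + 2 * s))
      = gagliardo N s u := by
    unfold gagliardo; congr 1; funext p; rw [sq]
  have e2 : (∫ x : Vec N, g x * u x * u x) = ∫ x : Vec N, g x * u x ^ 2 := by
    congr 1; funext x; ring
  have e3 : (∫ x : Vec N, u x * u x) = ∫ x : Vec N, u x ^ 2 := by
    congr 1; funext x; ring
  rw [e1, e2, e3] at heq
  unfold Phi; linarith

private lemma sq_integral_pos {u : Vec N → ℝ} (hu : MemLp u 2 (volume : Measure (Vec N)))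
    (hne : ¬ u =ᵐ[(volume : Measure (Vec N))] 0) : 0 < ∫ x : Vec N, u x ^ 2 := by
  rcases (integral_nonneg (f := fun x : Vec N => u x ^ 2) fun x => sq_nonneg (u x)).lt_or_eq with h | h
  · exact h
  · exfalso; apply hne
    have h0 := (integral_eq_zero_iff_of_nonneg_ae
      (Eventually.of_forall fun x => sq_nonneg (u x)) hu.integrable_sq).mp h.symm
    filter_upwards [h0] with x hx
    simpa using sq_eq_zero_iff.mp (by simpa using hx)

private lemma ae_eq_of_integral_eq {α : Type*} {m : MeasurableSpace α} {μ : Measure α}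
    {f h : α → ℝ} (hf : Integrable f μ) (hh : Integrable h μ) (hle : f ≤ᵐ[μ] h)
    (heq : ∫ x, f x ∂μ = ∫ x, h x ∂μ) : f =ᵐ[μ] h := by
  have hnn : 0 ≤ᵐ[μ] fun x => h x - f x := by
    filter_upwards [hle] with x hx; simpa [sub_nonneg] using hx
  have hzero : (∫ x, (h x - f x) ∂μ) = 0 := by
    rw [integral_sub hh hf, heq, sub_self]
  have h0 := (integral_eq_zero_iff_of_nonneg_ae hnn (hh.sub hf)).mp hzero
  filter_upwards [h0] with x hx
  have : h x - f x = 0 := by simpa using hx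
  linarith

private lemma ae_fst {pr : Vec N → Prop} (h : ∀ᵐ x : Vec N, pr x) :
    ∀ᵐ q : Vec N × Vec N, pr q.1 :=
  (Measure.quasiMeasurePreserving_fst
    (μ := (volume : Measure (Vec N))) (ν := (volume : Measure (Vec N)))).ae h

private lemma ae_snd {pr : Vec N → Prop} (h : ∀ᵐ x : Vec N, pr x) :
    ∀ᵐ q : Vec N × Vec N, pr q.2 :=
  (Measure.quasiMeasurePreserving_snd
    (μ := (volume : Measure (Vec N))) (ν := (volume : Measure (Vec N)))).ae h

private lemma diag_null (hN : 0 < N) : ∀ᵐ p : Vec N × Vec N, p.1 ≠ p.2 := by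
  haveI : Nonempty (Fin N) := ⟨⟨0, hN⟩⟩
  have hmeas : MeasurableSet {p : Vec N × Vec N | p.1 = p.2} :=
    measurableSet_eq_fun measurable_fst measurable_snd
  have hz : (volume : Measure (Vec N × Vec N)) {p : Vec N × Vec N | p.1 = p.2} = 0 := by
    rw [Measure.volume_eq_prod, Measure.prod_apply hmeas]
    have : ∀ x : Vec N, (volume : Measure (Vec N))
        (Prod.mk x ⁻¹' {p : Vec N × Vec N | p.1 = p.2}) = 0 := by
      intro x
      have : (Prod.mk x ⁻¹' {p : Vec N × Vec N | p.1 = p.2}) = {x} := by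
        ext y; simp [eq_comm]
      rw [this, measure_singleton]
    simp [this]
  rw [ae_iff]
  simpa using hz

private lemma eigen_neg {lam : ℝ} {u : Vec N → ℝ} (h : IsEigenpair N s β g lam u) :
    IsEigenpair N s β g lam (-u) := by
  obtain ⟨⟨hL2, hInt⟩, hne, heq⟩ := h
  refine ⟨⟨hL2.neg, ?_⟩, ?_, ?_⟩
  · have : ∀ p : Vec N × Vec N,
        ((-u) p.1 - (-u) p.2) ^ 2 / ‖p.1 - p.2‖ ^ ((N : ℝ) + 2 * s)
        = (u p.1 - u p.2) ^ 2 / ‖p.1 - p.2‖ ^ ((N : ℝ) + 2 * s) := by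
      intro p; simp only [Pi.neg_apply]; ring_nf
    simpa only [this] using hInt
  · intro hc; apply hne
    filter_upwards [hc] with x hx
    have : -(u x) = 0 := by simpa using hx
    simpa using neg_eq_zero.mp this
  · intro φ hφ
    have h0 := heq φ hφ
    have A : (∫ p : Vec N × Vec N,
        ((-u) p.1 - (-u) p.2) * (φ p.1 - φ p.2) / ‖p.1 - p.2‖ ^ ((N : ℝ) + 2 * s))
        = - ∫ p : Vec N × Vec N,
        (u p.1 - u p.2) * (φ p.1 - φ p.2) / ‖p.1 - p.2‖ ^ ((N : ℝ) + 2 * s) := by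
      rw [← integral_neg]; congr 1; funext p; simp only [Pi.neg_apply]; ring
    have B : (∫ x : Vec N, g x * (-u) x * φ x) = - ∫ x : Vec N, g x * u x * φ x := by
      rw [← integral_neg]; congr 1; funext x; simp only [Pi.neg_apply]; ring
    have C : (∫ x : Vec N, (-u) x * φ x) = - ∫ x : Vec N, u x * φ x := by
      rw [← integral_neg]; congr 1; funext x; simp only [Pi.neg_apply]; ring
    rw [A, B, C]; linarith

private lemma eigen_congr {lam : ℝ} {u v : Vec N → ℝ} (h : IsEigenpair N s β g lam u)
    (he : u =ᵐ[(volume : Measure (Vec N))] v) : IsEigenpair N s β g lam v := by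
  obtain ⟨⟨hL2, hInt⟩, hne, heq⟩ := h
  have hprod : ∀ᵐ q : Vec N × Vec N, u q.1 = v q.1 ∧ u q.2 = v q.2 := by
    filter_upwards [ae_fst he, ae_snd he] with q h1 h2
    exact ⟨h1, h2⟩
  refine ⟨⟨hL2.ae_eq he, ?_⟩, ?_, ?_⟩
  · refine hInt.congr ?_
    filter_upwards [hprod] with q hq
    rw [hq.1, hq.2]
  · intro hc; exact hne (he.trans hc)
  · intro φ hφ
    have h0 := heq φ hφ
    have A : (∫ p : Vec N × Vec N,
        (v p.1 - v p.2) * (φ p.1 - φ p.2) / ‖p.1 - p.2‖ ^ ((N : ℝ) + 2 * s))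
        = ∫ p : Vec N × Vec N,
        (u p.1 - u p.2) * (φ p.1 - φ p.2) / ‖p.1 - p.2‖ ^ ((N : ℝ) + 2 * s) := by
      refine integral_congr_ae ?_
      filter_upwards [hprod] with q hq
      rw [hq.1, hq.2]
    have B : (∫ x : Vec N, g x * v x * φ x) = ∫ x : Vec N, g x * u x * φ x := by
      refine integral_congr_ae ?_
      filter_upwards [he] with x hx
      rw [hx]
    have C : (∫ x : Vec N, v x * φ x) = ∫ x : Vec N, u x * φ x := by
      refine integral_congr_ae ?_
      filter_upwards [he] with x hx
      rw [hx]
    rw [A, B, C]; exact h0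

end Aux

section Key

variable {N : ℕ} {s β : ℝ} {g : Vec N → ℝ}

private lemma kernel_measurable (hc : 0 ≤ (N : ℝ) + 2 * s) :
    Measurable (fun p : Vec N × Vec N => ‖p.1 - p.2‖ ^ ((N : ℝ) + 2 * s)) :=
  (((continuous_fst.sub continuous_snd).norm).rpow_const
    (fun _ => Or.inr hc)).measurable

set_option maxHeartbeats 2000000 in
/-- Key lemma: there is no a.e. nonnegative eigenfunction for an eigenvalue `lam ≠ λ₁`,
assuming `λ₁` is itself an eigenvalue. -/
private lemma no_nonneg_eigen (hN : 0 < N) (hc : 0 ≤ (N : ℝ) + 2 * s) (hβ : 0 < β)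
    (hg1 : ∀ x, 0 ≤ g x)
    (h1 : ∃ e : Vec N → ℝ, IsEigenpair N s β g (lambda1 N s β g) e)
    {lam : ℝ} (hlam : lam ≠ lambda1 N s β g) {ψ0 : Vec N → ℝ}
    (hψ0 : IsEigenpair N s β g lam ψ0)
    (hpos0 : ∀ᵐ x : Vec N, 0 ≤ ψ0 x) : False := by
  classical
  -- measurable versions
  obtain ⟨e0, he0⟩ := h1
  have hψsm := hψ0.1.1.aestronglyMeasurable
  set ψ : Vec N → ℝ := hψsm.mk ψ0 with hψdef
  have hmψ : Measurable ψ := hψsm.stronglyMeasurable_mk.measurable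
  have hψeq : ψ0 =ᵐ[(volume : Measure (Vec N))] ψ := hψsm.ae_eq_mk
  have hψ : IsEigenpair N s β g lam ψ := eigen_congr hψ0 hψeq
  have hpos : ∀ᵐ x : Vec N, 0 ≤ ψ x := by
    filter_upwards [hpos0, hψeq] with x hx1 hx2
    rw [← hx2]; exact hx1
  have hesm := he0.1.1.aestronglyMeasurable
  set e1 : Vec N → ℝ := hesm.mk e0 with he1def
  have hme1 : Measurable e1 := hesm.stronglyMeasurable_mk.measurable
  have he1 : IsEigenpair N s β g (lambda1 N s β g) e1 :=
    eigen_congr he0 hesm.ae_eq_mk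
  -- Step A: produce a nonnegative measurable first eigenfunction
  have key_e : ∃ e : Vec N → ℝ, Measurable e ∧
      IsEigenpair N s β g (lambda1 N s β g) e ∧ ∀ᵐ x : Vec N, 0 ≤ e x := by
    set t := ∫ x : Vec N, e1 x ^ 2 with htdef
    have ht : 0 < t := sq_integral_pos he1.1.1 he1.2.1
    have habs_mem : MemLp (fun x => |e1 x|) 2 (volume : Measure (Vec N)) := by
      simpa [Real.norm_eq_abs] using he1.1.1.norm
    have hFle : ∀ p : Vec N × Vec N,
        (|e1 p.1| - |e1 p.2|) ^ 2 / ‖p.1 - p.2‖ ^ ((N : ℝ) + 2 * s)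
          ≤ (e1 p.1 - e1 p.2) ^ 2 / ‖p.1 - p.2‖ ^ ((N : ℝ) + 2 * s) := by
      intro p
      refine div_le_div_aux' _ _ _ ?_ (ker_nonneg p)
      nlinarith [abs_abs_sub_abs_le_abs_sub (e1 p.1) (e1 p.2), sq_abs (e1 p.1 - e1 p.2),
        abs_nonneg (|e1 p.1| - |e1 p.2|), abs_nonneg (e1 p.1 - e1 p.2),
        sq_abs (e1 p.1), sq_abs (e1 p.2), abs_mul (e1 p.1) (e1 p.2),
        abs_nonneg (e1 p.1 * e1 p.2), le_abs_self (e1 p.1 * e1 p.2)]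
    have habs_int : Integrable (fun p : Vec N × Vec N =>
        (|e1 p.1| - |e1 p.2|) ^ 2 / ‖p.1 - p.2‖ ^ ((N : ℝ) + 2 * s))
        (volume : Measure (Vec N × Vec N)) := by
      refine Integrable.mono' he1.1.2 ?_ (Eventually.of_forall fun p => ?_)
      · exact ((((hme1.comp measurable_fst).abs.sub
          (hme1.comp measurable_snd).abs).pow_const 2).div
          (kernel_measurable hc)).aestronglyMeasurable
      · rw [Real.norm_eq_abs, abs_of_nonneg (div_nonneg (sq_nonneg _) (ker_nonneg p))]
        exact hFle p
    have habs : memHs N s (fun x => |e1 x|) := ⟨habs_mem, habs_int⟩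
    have htabs : (∫ x : Vec N, |e1 x| ^ 2) = t := by
      rw [htdef]; congr 1; funext x; rw [sq_abs]
    have hE : Phi N s β g e1 = lambda1 N s β g * t := test_self he1
    have hle1 : lambda1 N s β g * t ≤ Phi N s β g (fun x => |e1 x|) := by
      have := lambda1_le (g := g) hβ hg1 habs (by rw [htabs]; exact ht)
      rwa [htabs] at this
    have hgabs : (∫ x : Vec N, g x * |e1 x| ^ 2) = ∫ x : Vec N, g x * e1 x ^ 2 := by
      congr 1; funext x; rw [sq_abs]
    have hgag_le : gagliardo N s (fun x => |e1 x|) ≤ gagliardo N s e1 :=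
      integral_mono habs_int he1.1.2 fun p => hFle p
    have hgag_eq : gagliardo N s (fun x => |e1 x|) = gagliardo N s e1 := by
      have h2 : Phi N s β g (fun x => |e1 x|) ≤ Phi N s β g e1 := by
        unfold Phi; rw [hgabs]; linarith
      have h3 : Phi N s β g (fun x => |e1 x|) = Phi N s β g e1 := le_antisymm h2 (by linarith)
      unfold Phi at h3; rw [hgabs] at h3; linarith
    have haeeq : (fun p : Vec N × Vec N =>
        (|e1 p.1| - |e1 p.2|) ^ 2 / ‖p.1 - p.2‖ ^ ((N : ℝ) + 2 * s)) =ᵐ[volume]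
        (fun p : Vec N × Vec N =>
        (e1 p.1 - e1 p.2) ^ 2 / ‖p.1 - p.2‖ ^ ((N : ℝ) + 2 * s)) :=
      ae_eq_of_integral_eq habs_int he1.1.2 (Eventually.of_forall hFle) hgag_eq
    have hsign : ∀ᵐ p : Vec N × Vec N, 0 ≤ e1 p.1 * e1 p.2 := by
      filter_upwards [haeeq, diag_null hN] with p hp hne
      have hK : 0 < ‖p.1 - p.2‖ ^ ((N : ℝ) + 2 * s) :=
        Real.rpow_pos_of_pos (norm_pos_iff.mpr (sub_ne_zero.mpr hne)) _
      have hnum : (|e1 p.1| - |e1 p.2|) ^ 2 = (e1 p.1 - e1 p.2) ^ 2 := by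
        have h3 := congrArg (fun z => z * (‖p.1 - p.2‖ ^ ((N : ℝ) + 2 * s))) hp
        simpa [div_mul_cancel₀, hK.ne'] using h3
      nlinarith [sq_abs (e1 p.1), sq_abs (e1 p.2), abs_mul (e1 p.1) (e1 p.2),
        abs_nonneg (e1 p.1 * e1 p.2)]
    by_cases hQ : (volume : Measure (Vec N)) {x | e1 x < 0} = 0
    · refine ⟨e1, hme1, he1, ?_⟩
      have : ∀ᵐ x : Vec N, ¬ e1 x < 0 := by rw [ae_iff]; simpa using hQ
      filter_upwards [this] with x hx
      exact not_lt.mp hx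
    · by_cases hP : (volume : Measure (Vec N)) {x | 0 < e1 x} = 0
      · refine ⟨-e1, hme1.neg, eigen_neg he1, ?_⟩
        have : ∀ᵐ x : Vec N, ¬ 0 < e1 x := by rw [ae_iff]; simpa using hP
        filter_upwards [this] with x hx
        simpa using not_lt.mp hx
      · exfalso
        have hSsub : ({x | 0 < e1 x} ×ˢ {x | e1 x < 0} : Set (Vec N × Vec N))
            ⊆ {p : Vec N × Vec N | ¬ 0 ≤ e1 p.1 * e1 p.2} := by
          rintro ⟨x, y⟩ ⟨hx, hy⟩
          simp only [Set.mem_setOf_eq] at hx hy ⊢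
          exact not_le.mpr (mul_neg_of_pos_of_neg hx hy)
        have hS0 : (volume : Measure (Vec N × Vec N))
            ({x | 0 < e1 x} ×ˢ {x | e1 x < 0}) = 0 :=
          measure_mono_null hSsub (by rw [← ae_iff] ; exact hsign)
        rw [Measure.volume_eq_prod, Measure.prod_prod] at hS0
        rcases mul_eq_zero.mp hS0 with h | h
        · exact hP h
        · exact hQ h
  obtain ⟨e, hme, he, hpe⟩ := key_e
  -- orthogonality
  have horth : (∫ x : Vec N, e x * ψ x) = 0 := by
    have hA := he.2.2 ψ hψ.1
    have hB := hψ.2.2 e he.1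
    have c1 : (∫ p : Vec N × Vec N,
        (ψ p.1 - ψ p.2) * (e p.1 - e p.2) / ‖p.1 - p.2‖ ^ ((N : ℝ) + 2 * s))
        = ∫ p : Vec N × Vec N,
        (e p.1 - e p.2) * (ψ p.1 - ψ p.2) / ‖p.1 - p.2‖ ^ ((N : ℝ) + 2 * s) := by
      congr 1; funext p; ring
    have c2 : (∫ x : Vec N, g x * ψ x * e x) = ∫ x : Vec N, g x * e x * ψ x := by
      congr 1; funext x; ring
    have c3 : (∫ x : Vec N, ψ x * e x) = ∫ x : Vec N, e x * ψ x := by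
      congr 1; funext x; ring
    rw [c1, c2, c3] at hB
    have hfact : (lambda1 N s β g - lam) * (∫ x : Vec N, e x * ψ x) = 0 := by linarith
    rcases mul_eq_zero.mp hfact with h | h
    · exact absurd (by linarith : lam = lambda1 N s β g) hlam
    · exact h
  -- e·ψ is integrable, nonneg, with zero integral: hence zero a.e.
  have hint_eψ : Integrable (fun x => e x * ψ x) (volume : Measure (Vec N)) := by
    refine Integrable.mono' ((he.1.1.integrable_sq.add hψ.1.1.integrable_sq).div_const 2)
      ((hme.mul hmψ).aestronglyMeasurable) (Eventually.of_forall fun x => ?_)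
    simp only [Pi.add_apply]
    rw [Real.norm_eq_abs]
    nlinarith [sq_nonneg (|e x| - |ψ x|), sq_abs (e x), sq_abs (ψ x),
      abs_mul (e x) (ψ x), le_abs_self (e x * ψ x), neg_abs_le (e x * ψ x),
      abs_nonneg (e x * ψ x)]
  have heψnn : 0 ≤ᵐ[(volume : Measure (Vec N))] fun x => e x * ψ x := by
    filter_upwards [hpe, hpos] with x h1 h2
    exact mul_nonneg h1 h2
  have heψ0 : ∀ᵐ x : Vec N, e x * ψ x = 0 := by
    have := (integral_eq_zero_iff_of_nonneg_ae heψnn hint_eψ).mp horth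
    filter_upwards [this] with x hx
    simpa using hx
  have hg0 : (∫ x : Vec N, g x * e x * ψ x) = 0 := by
    have hcongr : (fun x : Vec N => g x * e x * ψ x) =ᵐ[volume] (fun _ => (0 : ℝ)) := by
      filter_upwards [heψ0] with x hx
      rw [mul_assoc, hx, mul_zero]
    rw [integral_congr_ae hcongr, integral_zero]
  have hbil : (∫ p : Vec N × Vec N,
      (e p.1 - e p.2) * (ψ p.1 - ψ p.2) / ‖p.1 - p.2‖ ^ ((N : ℝ) + 2 * s)) = 0 := by
    have hA := he.2.2 ψ hψ.1
    rw [hg0, horth] at hA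
    linarith
  -- the bilinear integrand is integrable and a.e. nonpositive with zero integral
  have hbil_int : Integrable (fun p : Vec N × Vec N =>
      (e p.1 - e p.2) * (ψ p.1 - ψ p.2) / ‖p.1 - p.2‖ ^ ((N : ℝ) + 2 * s))
      (volume : Measure (Vec N × Vec N)) := by
    refine Integrable.mono' ((he.1.2.add hψ.1.2).div_const 2) ?_
      (Eventually.of_forall fun p => ?_)
    · exact ((((hme.comp measurable_fst).sub (hme.comp measurable_snd)).mul
        ((hmψ.comp measurable_fst).sub (hmψ.comp measurable_snd))).div
        (kernel_measurable hc)).aestronglyMeasurable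
    · simp only [Pi.add_apply]
      rw [Real.norm_eq_abs, abs_div, abs_of_nonneg (ker_nonneg p)]
      have h1 : |(e p.1 - e p.2) * (ψ p.1 - ψ p.2)|
          ≤ ((e p.1 - e p.2) ^ 2 + (ψ p.1 - ψ p.2) ^ 2) / 2 := by
        nlinarith [sq_nonneg (|e p.1 - e p.2| - |ψ p.1 - ψ p.2|),
          sq_abs (e p.1 - e p.2), sq_abs (ψ p.1 - ψ p.2),
          abs_mul (e p.1 - e p.2) (ψ p.1 - ψ p.2),
          le_abs_self ((e p.1 - e p.2) * (ψ p.1 - ψ p.2)),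
          neg_abs_le ((e p.1 - e p.2) * (ψ p.1 - ψ p.2)),
          abs_nonneg ((e p.1 - e p.2) * (ψ p.1 - ψ p.2))]
      calc |(e p.1 - e p.2) * (ψ p.1 - ψ p.2)| / ‖p.1 - p.2‖ ^ ((N : ℝ) + 2 * s)
          ≤ (((e p.1 - e p.2) ^ 2 + (ψ p.1 - ψ p.2) ^ 2) / 2)
            / ‖p.1 - p.2‖ ^ ((N : ℝ) + 2 * s) :=
            div_le_div_aux' _ _ _ h1 (ker_nonneg p)
        _ = ((e p.1 - e p.2) ^ 2 / ‖p.1 - p.2‖ ^ ((N : ℝ) + 2 * s)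
            + (ψ p.1 - ψ p.2) ^ 2 / ‖p.1 - p.2‖ ^ ((N : ℝ) + 2 * s)) / 2 := by ring
  have hae_le : (fun p : Vec N × Vec N =>
      (e p.1 - e p.2) * (ψ p.1 - ψ p.2) / ‖p.1 - p.2‖ ^ ((N : ℝ) + 2 * s))
      ≤ᵐ[(volume : Measure (Vec N × Vec N))] (fun _ => (0 : ℝ)) := by
    filter_upwards [ae_fst heψ0, ae_snd heψ0, ae_fst hpe, ae_snd hpe,
      ae_fst hpos, ae_snd hpos] with p h11 h22 he1' he2' hψ1' hψ2'
    refine div_nonpos_of_nonpos_of_nonneg ?_ (ker_nonneg p)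
    nlinarith [mul_nonneg he1' hψ2', mul_nonneg he2' hψ1']
  have hae0 : (fun p : Vec N × Vec N =>
      (e p.1 - e p.2) * (ψ p.1 - ψ p.2) / ‖p.1 - p.2‖ ^ ((N : ℝ) + 2 * s))
      =ᵐ[(volume : Measure (Vec N × Vec N))] (fun _ => (0 : ℝ)) := by
    refine ae_eq_of_integral_eq hbil_int ?_ hae_le ?_
    · exact integrable_zero _ _ _
    · rw [hbil, integral_zero]
  have hzero : ∀ᵐ p : Vec N × Vec N, e p.1 * ψ p.2 = 0 := by
    filter_upwards [hae0, diag_null hN, ae_fst heψ0, ae_snd heψ0,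
      ae_fst hpe, ae_snd hpe, ae_fst hpos, ae_snd hpos]
      with p h0 hne h11 h22 he1' he2' hψ1' hψ2'
    have hK : 0 < ‖p.1 - p.2‖ ^ ((N : ℝ) + 2 * s) :=
      Real.rpow_pos_of_pos (norm_pos_iff.mpr (sub_ne_zero.mpr hne)) _
    have hnum : (e p.1 - e p.2) * (ψ p.1 - ψ p.2) = 0 := by
      rcases div_eq_zero_iff.mp h0 with h | h
      · exact h
      · exact absurd h hK.ne'
    have hexp : e p.1 * ψ p.2 + e p.2 * ψ p.1 = 0 := by linear_combination h11 + h22 - hnum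
    have hnn1 : 0 ≤ e p.1 * ψ p.2 := mul_nonneg he1' hψ2'
    have hnn2 : 0 ≤ e p.2 * ψ p.1 := mul_nonneg he2' hψ1'
    linarith
  have hfub : ∀ᵐ x : Vec N, ∀ᵐ y : Vec N, e x * ψ y = 0 :=
    Measure.ae_ae_of_ae_prod hzero
  have hψne : ¬ ∀ᵐ y : Vec N, ψ y = 0 := by
    intro hcon
    exact hψ.2.1 (by filter_upwards [hcon] with y hy; simpa using hy)
  have hezero : ∀ᵐ x : Vec N, e x = 0 := by
    filter_upwards [hfub] with x hx
    by_contra hex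
    apply hψne
    filter_upwards [hx] with y hy
    rcases mul_eq_zero.mp hy with h | h
    · exact absurd h hex
    · exact h
  exact he.2.1 (by filter_upwards [hezero] with x hx; simpa using hx)

end Key


/-- eigenfunctions associated with eigenvalues `λ ≠ λ₁` change sign:
both the positive part and the negative part are nonzero on sets of positive measure. -/
theorem higher_eigenfunctions_sign_changing (N : ℕ) (s β : ℝ) (hs : s ∈ Set.Ioo (0 : ℝ) 1)
    (hN : 2 * s < N) (hβ : 0 < β) (g : Vec N → ℝ) (hg : g1cond N g)
    (h1 : ∃ e : Vec N → ℝ, IsEigenpair N s β g (lambda1 N s β g) e)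
    (lam : ℝ) (φ : Vec N → ℝ) (hlam : lam ≠ lambda1 N s β g)
    (hφ : IsEigenpair N s β g lam φ) :
    0 < volume {x : Vec N | max (φ x) 0 ≠ 0} ∧
      0 < volume {x : Vec N | max (-φ x) 0 ≠ 0} := by
  have hs0 : 0 < s := hs.1
  have hN0 : 0 < N := by
    rcases Nat.eq_zero_or_pos N with h0 | h0
    · exfalso
      rw [h0] at hN
      push_cast at hN
      linarith
    · exact h0
  have hc : 0 ≤ (N : ℝ) + 2 * s := by positivity
  have hg1 : ∀ x, 0 ≤ g x := fun x => (hg.2.1 x).1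
  constructor
  · by_contra hcon
    have h0 : volume {x : Vec N | max (φ x) 0 ≠ 0} = 0 := by
      simpa [not_lt, le_zero_iff] using hcon
    have hae : ∀ᵐ x : Vec N, max (φ x) 0 = 0 := by
      rw [ae_iff]; simpa using h0
    have hps : ∀ᵐ x : Vec N, 0 ≤ (-φ) x := by
      filter_upwards [hae] with x hx
      simpa using neg_nonneg.mpr (max_eq_right_iff.mp hx)
    exact no_nonneg_eigen hN0 hc hβ hg1 h1 hlam (eigen_neg hφ) hps
  · by_contra hcon
    have h0 : volume {x : Vec N | max (-φ x) 0 ≠ 0} = 0 := by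
      simpa [not_lt, le_zero_iff] using hcon
    have hae : ∀ᵐ x : Vec N, max (-φ x) 0 = 0 := by
      rw [ae_iff]; simpa using h0
    have hps : ∀ᵐ x : Vec N, 0 ≤ φ x := by
      filter_upwards [hae] with x hx
      have := max_eq_right_iff.mp hx
      linarith
    exact no_nonneg_eigen hN0 hc hβ hg1 h1 hlam hφ hps
end
end

section
/- Let (λ₂, u) be an eigenpair of L_β with u sign-changing, u = u₊ − u₋, u₊ ≠ 0 ≠ u₋, and ∫ u₊ u₋ dx = 0. Define h : [0,1] → Σ by h(t) = (u₊ cos(πt) + u₋ sin(πt)) / ‖u₊ cos(πt) + u₋ sin(πt)‖_{L²}. Then Φ(h(t)) ≤ λ₂ for every t ∈ [0,1]. -/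
open MeasureTheory Filter Topology

noncomputable section

set_option maxHeartbeats 1000000 in
lemma path_aux (N : ℕ) (s β : ℝ) (hexp : 0 ≤ (N : ℝ) + 2 * s)
    (g : Vec N → ℝ) (hgm : Measurable g) (hgb : ∀ x, 0 ≤ g x ∧ g x ≤ 1)
    (u p m : Vec N → ℝ) (lam : ℝ)
    (hu2 : MemLp u 2 (volume : Measure (Vec N)))
    (heig : ∀ φ : Vec N → ℝ, memHs N s φ →
      (∫ q : Vec N × Vec N,
          (u q.1 - u q.2) * (φ q.1 - φ q.2) / ‖q.1 - q.2‖ ^ ((N : ℝ) + 2 * s)) +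
        β * ∫ x : Vec N, g x * u x * φ x = lam * ∫ x : Vec N, u x * φ x)
    (huG : Integrable (fun q : Vec N × Vec N =>
      (u q.1 - u q.2) ^ 2 / ‖q.1 - q.2‖ ^ ((N : ℝ) + 2 * s)) volume)
    (hpd : ∀ x, p x = max (u x) 0) (hmd : ∀ x, m x = max (-u x) 0)
    (hplus : ¬ p =ᵐ[(volume : Measure (Vec N))] 0)
    (hminus : ¬ m =ᵐ[(volume : Measure (Vec N))] 0)
    (a b : ℝ) (hab : a ^ 2 + b ^ 2 = 1) :
    Phi N s β g (fun x => (p x * a + m x * b) /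
      Real.sqrt (∫ y : Vec N, (p y * a + m y * b) ^ 2)) ≤ lam := by
  classical
  -- pointwise facts
  have hp0 : ∀ x, 0 ≤ p x := fun x => (hpd x) ▸ le_max_right _ _
  have hm0 : ∀ x, 0 ≤ m x := fun x => (hmd x) ▸ le_max_right _ _
  have hpm : ∀ x, p x * m x = 0 := by
    intro x
    rcases le_total (u x) 0 with h | h
    · rw [hpd x, max_eq_right h, zero_mul]
    · rw [hmd x, max_eq_right (neg_nonpos.mpr h), mul_zero]
  have hsub : ∀ x, p x - m x = u x := by
    intro x
    rw [hpd x, hmd x]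
    rcases le_total (u x) 0 with h | h
    · rw [max_eq_right h, max_eq_left (neg_nonneg.mpr h)]; ring
    · rw [max_eq_left h, max_eq_right (neg_nonpos.mpr h)]; ring
  have habs_p : ∀ x y, |p x - p y| ≤ |u x - u y| := by
    intro x y; rw [hpd x, hpd y]; exact abs_max_sub_max_le_abs _ _ _
  have habs_m : ∀ x y, |m x - m y| ≤ |u x - u y| := by
    intro x y; rw [hmd x, hmd y]
    calc |max (-u x) 0 - max (-u y) 0| ≤ |(-u x) - (-u y)| := abs_max_sub_max_le_abs _ _ _
      _ = |u x - u y| := by rw [← abs_neg]; ring_nf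
  have habs_u : ∀ x y : Vec N, |u x - u y| ≤ |u x - u y| := fun _ _ => le_rfl
  -- measurability
  have huA : AEStronglyMeasurable u (volume : Measure (Vec N)) := hu2.1
  have hpA : AEStronglyMeasurable p (volume : Measure (Vec N)) := by
    have h1 : AEStronglyMeasurable (fun x => max (u x) 0) (volume : Measure (Vec N)) :=
      huA.sup aestronglyMeasurable_const
    exact h1.congr (ae_of_all _ fun x => (hpd x).symm)
  have hmA : AEStronglyMeasurable m (volume : Measure (Vec N)) := by
    have h1 : AEStronglyMeasurable (fun x => max (-u x) 0) (volume : Measure (Vec N)) :=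
      huA.neg.sup aestronglyMeasurable_const
    exact h1.congr (ae_of_all _ fun x => (hmd x).symm)
  have hK : Measurable (fun q : Vec N × Vec N => ‖q.1 - q.2‖ ^ ((N : ℝ) + 2 * s)) :=
    ((Real.continuous_rpow_const hexp).comp
      (continuous_fst.sub continuous_snd).norm).measurable
  have hK0 : ∀ q : Vec N × Vec N, 0 ≤ ‖q.1 - q.2‖ ^ ((N : ℝ) + 2 * s) :=
    fun q => Real.rpow_nonneg (norm_nonneg _) _
  -- integrability of bilinear Gagliardo terms
  have key : ∀ f₁ f₂ : Vec N → ℝ,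
      AEStronglyMeasurable f₁ (volume : Measure (Vec N)) →
      AEStronglyMeasurable f₂ (volume : Measure (Vec N)) →
      (∀ x y, |f₁ x - f₁ y| ≤ |u x - u y|) → (∀ x y, |f₂ x - f₂ y| ≤ |u x - u y|) →
      Integrable (fun q : Vec N × Vec N =>
        (f₁ q.1 - f₁ q.2) * (f₂ q.1 - f₂ q.2) / ‖q.1 - q.2‖ ^ ((N : ℝ) + 2 * s)) volume := by
    intro f₁ f₂ h1 h2 hb1 hb2
    have hA : AEStronglyMeasurable (fun q : Vec N × Vec N =>
        (f₁ q.1 - f₁ q.2) * (f₂ q.1 - f₂ q.2) / ‖q.1 - q.2‖ ^ ((N : ℝ) + 2 * s)) volume := by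
      have m1 : AEMeasurable (fun q : Vec N × Vec N => f₁ q.1 - f₁ q.2) volume :=
        ((h1.comp_quasiMeasurePreserving Measure.quasiMeasurePreserving_fst).sub
          (h1.comp_quasiMeasurePreserving Measure.quasiMeasurePreserving_snd)).aemeasurable
      have m2 : AEMeasurable (fun q : Vec N × Vec N => f₂ q.1 - f₂ q.2) volume :=
        ((h2.comp_quasiMeasurePreserving Measure.quasiMeasurePreserving_fst).sub
          (h2.comp_quasiMeasurePreserving Measure.quasiMeasurePreserving_snd)).aemeasurable
      exact ((m1.mul m2).div hK.aemeasurable).aestronglyMeasurable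
    refine huG.mono hA (ae_of_all _ fun q => ?_)
    rw [Real.norm_eq_abs, Real.norm_eq_abs, abs_div, abs_mul,
      abs_of_nonneg (hK0 q), abs_of_nonneg (div_nonneg (sq_nonneg _) (hK0 q))]
    gcongr
    calc |f₁ q.1 - f₁ q.2| * |f₂ q.1 - f₂ q.2|
        ≤ |u q.1 - u q.2| * |u q.1 - u q.2| :=
          mul_le_mul (hb1 _ _) (hb2 _ _) (abs_nonneg _) (abs_nonneg _)
      _ = (u q.1 - u q.2) ^ 2 := by rw [← abs_mul, ← pow_two, abs_of_nonneg (sq_nonneg _)]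
  have keyPP := key p p hpA hpA habs_p habs_p
  have keyMM := key m m hmA hmA habs_m habs_m
  have keyPM := key p m hpA hmA habs_p habs_m
  have keyUP := key u p huA hpA habs_u habs_p
  have keyUM := key u m huA hmA habs_u habs_m
  -- L² facts
  have hbound : ∀ x, ‖p x‖ ≤ ‖u x‖ := by
    intro x
    rw [Real.norm_eq_abs, Real.norm_eq_abs, abs_of_nonneg (hp0 x), hpd x]
    exact max_le (le_abs_self _) (abs_nonneg _)
  have hboundm : ∀ x, ‖m x‖ ≤ ‖u x‖ := by
    intro x
    rw [Real.norm_eq_abs, Real.norm_eq_abs, abs_of_nonneg (hm0 x), hmd x]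
    exact max_le (abs_neg (u x) ▸ le_abs_self _) (abs_nonneg _)
  have hpL2 : MemLp p 2 (volume : Measure (Vec N)) :=
    hu2.of_le hpA (ae_of_all _ hbound)
  have hmL2 : MemLp m 2 (volume : Measure (Vec N)) :=
    hu2.of_le hmA (ae_of_all _ hboundm)
  have hp2 : Integrable (fun x => p x ^ 2) (volume : Measure (Vec N)) := hpL2.integrable_sq
  have hm2 : Integrable (fun x => m x ^ 2) (volume : Measure (Vec N)) := hmL2.integrable_sq
  have hgp2 : Integrable (fun x => g x * p x ^ 2) (volume : Measure (Vec N)) := by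
    refine hp2.mono (hgm.aestronglyMeasurable.mul ((hpA.mul hpA).congr
      (ae_of_all _ fun x => (pow_two (p x)).symm))) (ae_of_all _ fun x => ?_)
    rw [Real.norm_eq_abs, Real.norm_eq_abs, abs_of_nonneg (sq_nonneg (p x)),
      abs_of_nonneg (mul_nonneg (hgb x).1 (sq_nonneg _))]
    nlinarith [(hgb x).1, (hgb x).2, sq_nonneg (p x)]
  have hgm2 : Integrable (fun x => g x * m x ^ 2) (volume : Measure (Vec N)) := by
    refine hm2.mono (hgm.aestronglyMeasurable.mul ((hmA.mul hmA).congr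
      (ae_of_all _ fun x => (pow_two (m x)).symm))) (ae_of_all _ fun x => ?_)
    rw [Real.norm_eq_abs, Real.norm_eq_abs, abs_of_nonneg (sq_nonneg (m x)),
      abs_of_nonneg (mul_nonneg (hgb x).1 (sq_nonneg _))]
    nlinarith [(hgb x).1, (hgb x).2, sq_nonneg (m x)]
  -- positivity of the L² masses
  have hposP : 0 < ∫ x : Vec N, p x ^ 2 := by
    rcases (integral_nonneg (f := fun x => p x ^ 2) fun x => sq_nonneg (p x)).lt_or_eq with h | h
    · exact h
    · exfalso
      apply hplus
      have h0 := (integral_eq_zero_iff_of_nonneg (f := fun x => p x ^ 2) (fun x => sq_nonneg (p x)) hp2).mp h.symm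
      filter_upwards [h0] with x hx
      have hx2 : p x ^ 2 = 0 := by simpa using hx
      simpa using (pow_eq_zero_iff two_ne_zero).mp hx2
  have hposM : 0 < ∫ x : Vec N, m x ^ 2 := by
    rcases (integral_nonneg (f := fun x => m x ^ 2) fun x => sq_nonneg (m x)).lt_or_eq with h | h
    · exact h
    · exfalso
      apply hminus
      have h0 := (integral_eq_zero_iff_of_nonneg (f := fun x => m x ^ 2) (fun x => sq_nonneg (m x)) hm2).mp h.symm
      filter_upwards [h0] with x hx
      have hx2 : m x ^ 2 = 0 := by simpa using hx
      simpa using (pow_eq_zero_iff two_ne_zero).mp hx2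
  -- membership in H^s
  have hPmem : memHs N s p := ⟨hpL2, by simpa [pow_two] using keyPP⟩
  have hMmem : memHs N s m := ⟨hmL2, by simpa [pow_two] using keyMM⟩
  -- pointwise product identities
  have hup : ∀ x, u x * p x = p x ^ 2 := by
    intro x; rw [← hsub x]; linear_combination -hpm x
  have hum : ∀ x, u x * m x = -(m x ^ 2) := by
    intro x; rw [← hsub x]; linear_combination hpm x
  -- eigen identity tested with p
  have heigp := heig p hPmem
  have hsplit1 : (∫ q : Vec N × Vec N,
        (u q.1 - u q.2) * (p q.1 - p q.2) / ‖q.1 - q.2‖ ^ ((N : ℝ) + 2 * s))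
      = (∫ q : Vec N × Vec N,
          (p q.1 - p q.2) * (p q.1 - p q.2) / ‖q.1 - q.2‖ ^ ((N : ℝ) + 2 * s))
        - ∫ q : Vec N × Vec N,
            (p q.1 - p q.2) * (m q.1 - m q.2) / ‖q.1 - q.2‖ ^ ((N : ℝ) + 2 * s) := by
    rw [← integral_sub keyPP keyPM]
    have hptw : ∀ q : Vec N × Vec N,
        (u q.1 - u q.2) * (p q.1 - p q.2) / ‖q.1 - q.2‖ ^ ((N : ℝ) + 2 * s)
        = (p q.1 - p q.2) * (p q.1 - p q.2) / ‖q.1 - q.2‖ ^ ((N : ℝ) + 2 * s)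
          - (p q.1 - p q.2) * (m q.1 - m q.2) / ‖q.1 - q.2‖ ^ ((N : ℝ) + 2 * s) := by
      intro q
      rw [div_sub_div_same]
      have hnum : (u q.1 - u q.2) * (p q.1 - p q.2)
          = (p q.1 - p q.2) * (p q.1 - p q.2) - (p q.1 - p q.2) * (m q.1 - m q.2) := by
        rw [← hsub q.1, ← hsub q.2]; ring
      rw [hnum]
    exact integral_congr_ae (ae_of_all _ hptw)
  have hIgup : (∫ x : Vec N, g x * u x * p x) = ∫ x : Vec N, g x * p x ^ 2 :=
    integral_congr_ae (ae_of_all _ fun x => show g x * u x * p x = g x * p x ^ 2 by rw [mul_assoc, hup x])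
  have hIup : (∫ x : Vec N, u x * p x) = ∫ x : Vec N, p x ^ 2 :=
    integral_congr_ae (ae_of_all _ fun x => hup x)
  have eq1 : (∫ q : Vec N × Vec N,
        (p q.1 - p q.2) * (p q.1 - p q.2) / ‖q.1 - q.2‖ ^ ((N : ℝ) + 2 * s))
      + β * ∫ x : Vec N, g x * p x ^ 2
      = lam * (∫ x : Vec N, p x ^ 2)
        + ∫ q : Vec N × Vec N,
            (p q.1 - p q.2) * (m q.1 - m q.2) / ‖q.1 - q.2‖ ^ ((N : ℝ) + 2 * s) := by
    rw [hsplit1, hIgup, hIup] at heigp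
    linarith
  -- eigen identity tested with m
  have heigm := heig m hMmem
  have hsplit2 : (∫ q : Vec N × Vec N,
        (u q.1 - u q.2) * (m q.1 - m q.2) / ‖q.1 - q.2‖ ^ ((N : ℝ) + 2 * s))
      = (∫ q : Vec N × Vec N,
          (p q.1 - p q.2) * (m q.1 - m q.2) / ‖q.1 - q.2‖ ^ ((N : ℝ) + 2 * s))
        - ∫ q : Vec N × Vec N,
            (m q.1 - m q.2) * (m q.1 - m q.2) / ‖q.1 - q.2‖ ^ ((N : ℝ) + 2 * s) := by
    rw [← integral_sub keyPM keyMM]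
    have hptw : ∀ q : Vec N × Vec N,
        (u q.1 - u q.2) * (m q.1 - m q.2) / ‖q.1 - q.2‖ ^ ((N : ℝ) + 2 * s)
        = (p q.1 - p q.2) * (m q.1 - m q.2) / ‖q.1 - q.2‖ ^ ((N : ℝ) + 2 * s)
          - (m q.1 - m q.2) * (m q.1 - m q.2) / ‖q.1 - q.2‖ ^ ((N : ℝ) + 2 * s) := by
      intro q
      rw [div_sub_div_same]
      have hnum : (u q.1 - u q.2) * (m q.1 - m q.2)
          = (p q.1 - p q.2) * (m q.1 - m q.2) - (m q.1 - m q.2) * (m q.1 - m q.2) := by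
        rw [← hsub q.1, ← hsub q.2]; ring
      rw [hnum]
    exact integral_congr_ae (ae_of_all _ hptw)
  have hIgum : (∫ x : Vec N, g x * u x * m x) = -∫ x : Vec N, g x * m x ^ 2 := by
    rw [← integral_neg]
    exact integral_congr_ae (ae_of_all _ fun x => show g x * u x * m x = -(g x * m x ^ 2) by rw [mul_assoc, hum x]; ring)
  have hIum : (∫ x : Vec N, u x * m x) = -∫ x : Vec N, m x ^ 2 := by
    rw [← integral_neg]
    exact integral_congr_ae (ae_of_all _ fun x => hum x)
  have eq2 : (∫ q : Vec N × Vec N,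
        (m q.1 - m q.2) * (m q.1 - m q.2) / ‖q.1 - q.2‖ ^ ((N : ℝ) + 2 * s))
      + β * ∫ x : Vec N, g x * m x ^ 2
      = lam * (∫ x : Vec N, m x ^ 2)
        + ∫ q : Vec N × Vec N,
            (p q.1 - p q.2) * (m q.1 - m q.2) / ‖q.1 - q.2‖ ^ ((N : ℝ) + 2 * s) := by
    rw [hsplit2, hIgum, hIum] at heigm
    linarith
  -- the cross term is nonpositive
  have hc : (∫ q : Vec N × Vec N,
      (p q.1 - p q.2) * (m q.1 - m q.2) / ‖q.1 - q.2‖ ^ ((N : ℝ) + 2 * s)) ≤ 0 := by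
    apply integral_nonpos
    intro q
    apply div_nonpos_of_nonpos_of_nonneg _ (hK0 q)
    nlinarith [hpm q.1, hpm q.2, mul_nonneg (hp0 q.1) (hm0 q.2), mul_nonneg (hp0 q.2) (hm0 q.1)]
  -- the L² mass of the combination
  have hv2 : ∀ x, (p x * a + m x * b) ^ 2 = a ^ 2 * p x ^ 2 + b ^ 2 * m x ^ 2 := by
    intro x; linear_combination (2 * a * b) * hpm x
  have hR : (∫ y : Vec N, (p y * a + m y * b) ^ 2)
      = a ^ 2 * (∫ x : Vec N, p x ^ 2) + b ^ 2 * ∫ x : Vec N, m x ^ 2 := by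
    rw [integral_congr_ae (ae_of_all _ fun x => hv2 x),
      integral_add (hp2.const_mul _) (hm2.const_mul _), integral_const_mul, integral_const_mul]
  have hRpos : 0 < a ^ 2 * (∫ x : Vec N, p x ^ 2) + b ^ 2 * ∫ x : Vec N, m x ^ 2 := by
    rcases eq_or_ne a 0 with h0 | h0
    · have hb2 : b ^ 2 = 1 := by rw [h0] at hab; simpa using hab
      rw [h0, hb2]
      simpa using hposM
    · have h1 : 0 < a ^ 2 * ∫ x : Vec N, p x ^ 2 :=
        mul_pos (by positivity) hposP
      have h2 : 0 ≤ b ^ 2 * ∫ x : Vec N, m x ^ 2 := mul_nonneg (sq_nonneg _) hposM.le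
      linarith
  set r := Real.sqrt (∫ y : Vec N, (p y * a + m y * b) ^ 2) with hrdef
  have hrpos : 0 < r := by
    rw [hrdef]; exact Real.sqrt_pos.mpr (by rw [hR]; exact hRpos)
  have hrne : r ≠ 0 := ne_of_gt hrpos
  have hr2 : r ^ 2 = a ^ 2 * (∫ x : Vec N, p x ^ 2) + b ^ 2 * ∫ x : Vec N, m x ^ 2 := by
    rw [hrdef, Real.sq_sqrt (by rw [hR]; exact hRpos.le)]; exact hR
  -- expansion of the Gagliardo term of the path point
  have step1 : ∀ q : Vec N × Vec N,
      ((p q.1 * a + m q.1 * b) / r - (p q.2 * a + m q.2 * b) / r) ^ 2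
        / ‖q.1 - q.2‖ ^ ((N : ℝ) + 2 * s)
      = (a ^ 2 * ((p q.1 - p q.2) * (p q.1 - p q.2) / ‖q.1 - q.2‖ ^ ((N : ℝ) + 2 * s))
        + 2 * (a * b) * ((p q.1 - p q.2) * (m q.1 - m q.2) / ‖q.1 - q.2‖ ^ ((N : ℝ) + 2 * s))
        + b ^ 2 * ((m q.1 - m q.2) * (m q.1 - m q.2) / ‖q.1 - q.2‖ ^ ((N : ℝ) + 2 * s)))
        / r ^ 2 := by
    intro q
    rcases eq_or_ne (‖q.1 - q.2‖ ^ ((N : ℝ) + 2 * s)) 0 with hk | hk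
    · simp [hk]
    · field_simp
      ring
  have Hgag : (∫ q : Vec N × Vec N,
        ((p q.1 * a + m q.1 * b) / r - (p q.2 * a + m q.2 * b) / r) ^ 2
          / ‖q.1 - q.2‖ ^ ((N : ℝ) + 2 * s))
      = (a ^ 2 * (∫ q : Vec N × Vec N,
            (p q.1 - p q.2) * (p q.1 - p q.2) / ‖q.1 - q.2‖ ^ ((N : ℝ) + 2 * s))
        + 2 * (a * b) * (∫ q : Vec N × Vec N,
            (p q.1 - p q.2) * (m q.1 - m q.2) / ‖q.1 - q.2‖ ^ ((N : ℝ) + 2 * s))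
        + b ^ 2 * (∫ q : Vec N × Vec N,
            (m q.1 - m q.2) * (m q.1 - m q.2) / ‖q.1 - q.2‖ ^ ((N : ℝ) + 2 * s))) / r ^ 2 := by
    have int1 : Integrable (fun q : Vec N × Vec N =>
        a ^ 2 * ((p q.1 - p q.2) * (p q.1 - p q.2) / ‖q.1 - q.2‖ ^ ((N : ℝ) + 2 * s))
        + 2 * (a * b) * ((p q.1 - p q.2) * (m q.1 - m q.2) / ‖q.1 - q.2‖ ^ ((N : ℝ) + 2 * s)))
        volume := (keyPP.const_mul _).add (keyPM.const_mul _)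
    rw [integral_congr_ae (ae_of_all _ step1), integral_div,
      integral_add int1 (keyMM.const_mul _),
      integral_add (keyPP.const_mul _) (keyPM.const_mul _),
      integral_const_mul, integral_const_mul, integral_const_mul]
  -- expansion of the potential term
  have step2 : ∀ x : Vec N, g x * ((p x * a + m x * b) / r) ^ 2
      = (a ^ 2 * (g x * p x ^ 2) + b ^ 2 * (g x * m x ^ 2)) / r ^ 2 := by
    intro x
    rw [div_pow, ← mul_div_assoc]
    congr 1
    linear_combination (2 * a * b * g x) * hpm x
  have Hpot : (∫ x : Vec N, g x * ((p x * a + m x * b) / r) ^ 2)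
      = (a ^ 2 * (∫ x : Vec N, g x * p x ^ 2) + b ^ 2 * ∫ x : Vec N, g x * m x ^ 2) / r ^ 2 := by
    rw [integral_congr_ae (ae_of_all _ step2), integral_div,
      integral_add (hgp2.const_mul _) (hgm2.const_mul _), integral_const_mul, integral_const_mul]
  -- conclusion
  simp only [Phi, gagliardo]
  rw [Hgag, Hpot, ← mul_div_assoc, ← add_div,
    div_le_iff₀ (pow_pos hrpos 2), hr2]
  nlinarith [eq1, eq2, hc, sq_nonneg (a + b)]

/-- for a sign-changing eigenfunction `u` associated with `λ₂`, the path
`h(t) = (u₊ cos(πt) + u₋ sin(πt)) / ‖u₊ cos(πt) + u₋ sin(πt)‖₂` satisfies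
`Φ(h(t)) ≤ λ₂` for every `t ∈ [0,1]`. -/
theorem path_Phi_le_lambda2 (N : ℕ) (s β : ℝ) (hs : s ∈ Set.Ioo (0 : ℝ) 1)
    (hN : 2 * s < N) (hβ : 0 < β) (g : Vec N → ℝ) (hgm : Measurable g)
    (hgb : ∀ x, 0 ≤ g x ∧ g x ≤ 1) (u : Vec N → ℝ)
    (h : IsEigenpair N s β g (lambdaK N s β g 2) u)
    (hplus : ¬ (fun x => max (u x) 0) =ᵐ[(volume : Measure (Vec N))] 0)
    (hminus : ¬ (fun x => max (-u x) 0) =ᵐ[(volume : Measure (Vec N))] 0)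
    (horth : ∫ x : Vec N, max (u x) 0 * max (-u x) 0 = 0) :
    ∀ t ∈ Set.Icc (0 : ℝ) 1,
      Phi N s β g (fun x =>
        (max (u x) 0 * Real.cos (Real.pi * t) + max (-u x) 0 * Real.sin (Real.pi * t)) /
          Real.sqrt (∫ y : Vec N,
            (max (u y) 0 * Real.cos (Real.pi * t) +
              max (-u y) 0 * Real.sin (Real.pi * t)) ^ 2)) ≤ lambdaK N s β g 2 := by
  
  intro t ht
  have h1 : (0 : ℝ) ≤ (N : ℝ) + 2 * s := by
    have h2 : (0 : ℝ) ≤ (N : ℝ) := Nat.cast_nonneg N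
    linarith [hs.1]
  exact path_aux N s β h1 g hgm hgb u (fun x => max (u x) 0) (fun x => max (-u x) 0)
    (lambdaK N s β g 2) h.1.1 h.2.2 h.1.2 (fun x => rfl) (fun x => rfl) hplus hminus
    (Real.cos (Real.pi * t)) (Real.sin (Real.pi * t)) (Real.cos_sq_add_sin_sq _)
end
end
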